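/- Consider the process in which S₁ ~ θ on 𝒮, the demand X₁, X₂, … is i.i.d. ~ P_X and independent of S₁, at each time t the output Y_t is drawn (conditionally independently of the past given W_t) according to the structured policy b(· | W_t) where W_t = S_t − X_t, and S_{t+1} = S_t + Y_t − X_t. Then for every horizon T, (1/T) I(S₁, X^T; Y^T) = I(W₁; X₁) = H(W₁) − H(S₁). -/

import Mathlib

open Finset
open scoped Classical

namespace SmartMeter

/-! ### Basic information measures for finitely supported distributions.
All entropies and mutual informations are in bits (base-2 logarithms). -/

/-- Probability that the random variable `Z` takes the value `z` under the pmf `p`. -/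
noncomputable def pr {Ω α : Type*} [Fintype Ω] [DecidableEq α]
    (p : Ω → ℝ) (Z : Ω → α) (z : α) : ℝ :=
  ∑ ω ∈ Finset.univ.filter (fun ω => Z ω = z), p ω

/-- Shannon entropy (in bits) of the random variable `Z` under the pmf `p`. -/
noncomputable def ent {Ω α : Type*} [Fintype Ω] [DecidableEq α]
    (p : Ω → ℝ) (Z : Ω → α) : ℝ :=
  -∑ z ∈ Finset.univ.image Z, pr p Z z * Real.logb 2 (pr p Z z)

/-- Mutual information `I(A; B)`. -/
noncomputable def mutInfo {Ω α β : Type*} [Fintype Ω] [DecidableEq α] [DecidableEq β]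
    (p : Ω → ℝ) (A : Ω → α) (B : Ω → β) : ℝ :=
  ent p A + ent p B - ent p (fun ω => (A ω, B ω))

/-- Conditional entropy `H(A | C)`. -/
noncomputable def condEnt {Ω α γ : Type*} [Fintype Ω] [DecidableEq α] [DecidableEq γ]
    (p : Ω → ℝ) (A : Ω → α) (C : Ω → γ) : ℝ :=
  ent p (fun ω => (A ω, C ω)) - ent p C

/-- Conditional mutual information `I(A; B | C)`. -/
noncomputable def condMutInfo {Ω α β γ : Type*} [Fintype Ω] [DecidableEq α] [DecidableEq β]
    [DecidableEq γ] (p : Ω → ℝ) (A : Ω → α) (B : Ω → β) (C : Ω → γ) : ℝ :=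
  ent p (fun ω => (A ω, C ω)) + ent p (fun ω => (B ω, C ω))
    - ent p (fun ω => (A ω, B ω, C ω)) - ent p C

/-- `p` is a probability mass function on the finite type `Ω`. -/
def IsPMF {Ω : Type*} [Fintype Ω] (p : Ω → ℝ) : Prop :=
  (∀ ω, 0 ≤ p ω) ∧ ∑ ω, p ω = 1

/-- Extension of a pmf on `{0, …, n}` to an integer-indexed function (zero out of range). -/
noncomputable def extZ {n : ℕ} (f : Fin (n + 1) → ℝ) (k : ℤ) : ℝ :=
  if h : 0 ≤ k ∧ k ≤ (n : ℤ) then f ⟨k.toNat, by omega⟩ else 0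

/-! ### The single-letter quantity `J*` -/

/-- `I(S - X; X)` for independent `X ~ PX` on `{0,…,mx}` and `S ~ θ` on `{0,…,ms}`. -/
noncomputable def iidMI (mx ms : ℕ) (PX : Fin (mx + 1) → ℝ) (θ : Fin (ms + 1) → ℝ) : ℝ :=
  mutInfo (fun ω : Fin (mx + 1) × Fin (ms + 1) => PX ω.1 * θ ω.2)
    (fun ω => ((ω.2 : ℕ) : ℤ) - ((ω.1 : ℕ) : ℤ)) (fun ω => ω.1)

/-- `J* = min over pmfs θ on 𝒮 of I(S - X; X)`. -/
noncomputable def Jstar (mx ms : ℕ) (PX : Fin (mx + 1) → ℝ) : ℝ :=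
  sInf {r : ℝ | ∃ θ : Fin (ms + 1) → ℝ, IsPMF θ ∧ iidMI mx ms PX θ = r}

/-! ### The structured policy `b*` -/

/-- `ξ(w) = Σ_{(x,s) : s - x = w} PX(x) θ(s)`, the pmf of `W = S - X`. -/
noncomputable def xiOf (mx ms : ℕ) (PX : Fin (mx + 1) → ℝ) (θ : Fin (ms + 1) → ℝ)
    (w : ℤ) : ℝ :=
  ∑ x : Fin (mx + 1), ∑ s : Fin (ms + 1),
    if ((s : ℕ) : ℤ) - ((x : ℕ) : ℤ) = w then PX x * θ s else 0

/-- The structured policy with respect to `(θ, ξ)`: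
`b(y|w) = PX(y) θ(y + w) / ξ(w)` for `y ∈ 𝒳 ∩ 𝒴₀(w)` (when `ξ(w) > 0`), else `0`. -/
noncomputable def bstar (mx my ms : ℕ) (PX : Fin (mx + 1) → ℝ) (θ : Fin (ms + 1) → ℝ)
    (w : ℤ) (y : Fin (my + 1)) : ℝ :=
  if xiOf mx ms PX θ w = 0 then 0
  else extZ PX ((y : ℕ) : ℤ) * extZ θ (((y : ℕ) : ℤ) + w) / xiOf mx ms PX θ w

/-! ### Trajectory spaces, policies and induced joint laws.
Time is indexed from `0`; `ω = (s₁, x, y)` records the initial battery state `S₁ = ω.1`,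
the demands `X_{t+1} = ω.2.1 t` and the outputs `Y_{t+1} = ω.2.2 t` for `t = 0, …, T-1`. -/

/-- Trajectories of horizon `T`. -/
abbrev Traj (mx my ms T : ℕ) :=
  Fin (ms + 1) × (Fin T → Fin (mx + 1)) × (Fin T → Fin (my + 1))

variable {mx my ms T : ℕ}

/-- Demand at (0-based) time `t`, as an integer (junk value `0` for `t ≥ T`). -/
def Xat (ω : Traj mx my ms T) (t : ℕ) : ℤ :=
  if h : t < T then ((ω.2.1 ⟨t, h⟩ : ℕ) : ℤ) else 0

/-- Output at (0-based) time `t`, as an integer (junk value `0` for `t ≥ T`). -/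
def Yat (ω : Traj mx my ms T) (t : ℕ) : ℤ :=
  if h : t < T then ((ω.2.2 ⟨t, h⟩ : ℕ) : ℤ) else 0

/-- Battery state at (0-based) time `t`: `S_{t+1} = S_t + Y_t - X_t`, `Sat ω 0 = S₁`. -/
def Sat (ω : Traj mx my ms T) (t : ℕ) : ℤ :=
  ((ω.1 : ℕ) : ℤ) + ∑ i ∈ Finset.range t, (Yat ω i - Xat ω i)

/-- `W_t = S_t - X_t`. -/
def Wat (ω : Traj mx my ms T) (t : ℕ) : ℤ := Sat ω t - Xat ω t

/-- A general causal (class `Q_A`) randomized battery policy: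
`q_t(y_t | x^t, s^t, y^{t-1})`; since `s^t` is determined by `(s₁, x^{t-1}, y^{t-1})`,
the policy is a function of `(x^t, s₁, y^{t-1})`. -/
def PolicyA (mx my ms : ℕ) : Type :=
  (t : ℕ) → (Fin (t + 1) → Fin (mx + 1)) → Fin (ms + 1) → (Fin t → Fin (my + 1)) →
    Fin (my + 1) → ℝ

/-- A class-`Q_B` policy: `q_t(y_t | x_t, s_t, y^{t-1})`. -/
def PolicyB (mx my ms : ℕ) : Type :=
  (t : ℕ) → Fin (mx + 1) → ℤ → (Fin t → Fin (my + 1)) → Fin (my + 1) → ℝ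

/-- The battery state `S_t` computed from `s₁` and the history `(x^t, y^{t-1})`. -/
def hstate {t : ℕ} (s1 : Fin (ms + 1)) (x : Fin (t + 1) → Fin (mx + 1))
    (y : Fin t → Fin (my + 1)) : ℤ :=
  ((s1 : ℕ) : ℤ) + ∑ i : Fin t, (((y i : ℕ) : ℤ) - ((x i.castSucc : ℕ) : ℤ))

/-- Each `q_t(· | x^t, s^t, y^{t-1})` is a pmf on `𝒴`. -/
def CondPMFA (q : PolicyA mx my ms) : Prop :=
  ∀ (t : ℕ) (x : Fin (t + 1) → Fin (mx + 1)) (s1 : Fin (ms + 1)) (y : Fin t → Fin (my + 1)),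
    (∀ yt, 0 ≤ q t x s1 y yt) ∧ ∑ yt, q t x s1 y yt = 1

/-- Feasibility of a class-`Q_A` policy: conditional pmfs supported on
`𝒴₀(s_t - x_t) = {y ∈ 𝒴 : s_t - x_t + y ∈ 𝒮}`. -/
def FeasibleA (q : PolicyA mx my ms) : Prop :=
  CondPMFA q ∧
  ∀ (t : ℕ) (x : Fin (t + 1) → Fin (mx + 1)) (s1 : Fin (ms + 1)) (y : Fin t → Fin (my + 1)),
    ∀ yt, q t x s1 y yt ≠ 0 →
      0 ≤ hstate s1 x y - ((x (Fin.last t) : ℕ) : ℤ) + ((yt : ℕ) : ℤ) ∧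
      hstate s1 x y - ((x (Fin.last t) : ℕ) : ℤ) + ((yt : ℕ) : ℤ) ≤ (ms : ℤ)

/-- Each `q_t(· | x_t, s_t, y^{t-1})` is a pmf on `𝒴`. -/
def CondPMFB (q : PolicyB mx my ms) : Prop :=
  ∀ (t : ℕ) (xt : Fin (mx + 1)) (s : ℤ) (y : Fin t → Fin (my + 1)),
    (∀ yt, 0 ≤ q t xt s y yt) ∧ ∑ yt, q t xt s y yt = 1

/-- Feasibility of a class-`Q_B` policy. -/
def FeasibleB (q : PolicyB mx my ms) : Prop :=
  CondPMFB q ∧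
  ∀ (t : ℕ) (xt : Fin (mx + 1)) (s : ℤ) (y : Fin t → Fin (my + 1)),
    0 ≤ s → s ≤ (ms : ℤ) →
    ∀ yt, q t xt s y yt ≠ 0 →
      0 ≤ s - ((xt : ℕ) : ℤ) + ((yt : ℕ) : ℤ) ∧
      s - ((xt : ℕ) : ℤ) + ((yt : ℕ) : ℤ) ≤ (ms : ℤ)

/-- The demand prefix `x^t = (x_0, …, x_t)` of a trajectory. -/
def prefX (ω : Traj mx my ms T) (t : Fin T) : Fin ((t : ℕ) + 1) → Fin (mx + 1) :=
  fun i => ω.2.1 ⟨(i : ℕ), lt_of_le_of_lt (Nat.lt_succ_iff.mp i.isLt) t.isLt⟩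

/-- The output prefix `y^{t-1} = (y_0, …, y_{t-1})` of a trajectory. -/
def prefY (ω : Traj mx my ms T) (t : Fin T) : Fin (t : ℕ) → Fin (my + 1) :=
  fun i => ω.2.2 ⟨(i : ℕ), i.isLt.trans t.isLt⟩

/-- Joint law on trajectories induced by i.i.d. demand `PX`, initial battery pmf `PS1`
(independent of the demand), and a class-`Q_A` policy `q`. -/
noncomputable def jointA (PS1 : Fin (ms + 1) → ℝ) (PX : Fin (mx + 1) → ℝ)
    (q : PolicyA mx my ms) (T : ℕ) (ω : Traj mx my ms T) : ℝ :=
  PS1 ω.1 * ∏ t : Fin T,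
    (PX (ω.2.1 t) * q (t : ℕ) (prefX ω t) ω.1 (prefY ω t) (ω.2.2 t))

/-- Weight of a demand trajectory under a Markov chain `(PX1, Qm)`. -/
noncomputable def markovWt (PX1 : Fin (mx + 1) → ℝ) (Qm : Fin (mx + 1) → Fin (mx + 1) → ℝ)
    {T : ℕ} (x : Fin T → Fin (mx + 1)) : ℝ :=
  ∏ t : Fin T,
    if _h : (t : ℕ) = 0 then PX1 (x t)
    else Qm (x ⟨(t : ℕ) - 1, lt_of_le_of_lt (Nat.sub_le _ _) t.isLt⟩) (x t)

/-- Joint law on trajectories induced by Markov demand and a class-`Q_A` policy. -/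
noncomputable def jointAMarkov (PS1 : Fin (ms + 1) → ℝ) (PX1 : Fin (mx + 1) → ℝ)
    (Qm : Fin (mx + 1) → Fin (mx + 1) → ℝ) (q : PolicyA mx my ms) (T : ℕ)
    (ω : Traj mx my ms T) : ℝ :=
  PS1 ω.1 * markovWt PX1 Qm ω.2.1 *
    ∏ t : Fin T, q (t : ℕ) (prefX ω t) ω.1 (prefY ω t) (ω.2.2 t)

/-- Joint law on trajectories induced by Markov demand and a class-`Q_B` policy. -/
noncomputable def jointBMarkov (PS1 : Fin (ms + 1) → ℝ) (PX1 : Fin (mx + 1) → ℝ)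
    (Qm : Fin (mx + 1) → Fin (mx + 1) → ℝ) (q : PolicyB mx my ms) (T : ℕ)
    (ω : Traj mx my ms T) : ℝ :=
  PS1 ω.1 * markovWt PX1 Qm ω.2.1 *
    ∏ t : Fin T, q (t : ℕ) (ω.2.1 t) (Sat ω (t : ℕ)) (prefY ω t) (ω.2.2 t)

/-- The memoryless time-invariant policy `q_t(y | x, s) = b*(y | s - x)`, as a member of the
class of general causal policies. -/
noncomputable def structuredPolicyA (mx my ms : ℕ) (PX : Fin (mx + 1) → ℝ)
    (θ : Fin (ms + 1) → ℝ) : PolicyA mx my ms :=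
  fun t x s1 y yt => bstar mx my ms PX θ (hstate s1 x y - ((x (Fin.last t) : ℕ) : ℤ)) yt


/-! ### Auxiliary lemmas -/

section BasicLemmas

variable {mx my ms : ℕ} {PX : Fin (mx + 1) → ℝ} {θ : Fin (ms + 1) → ℝ}

lemma extZ_coe {n : ℕ} (f : Fin (n+1) → ℝ) (i : Fin (n+1)) : extZ f ((i:ℕ):ℤ) = f i := by
  have h : (0:ℤ) ≤ ((i:ℕ):ℤ) ∧ ((i:ℕ):ℤ) ≤ (n:ℤ) := by
    have := i.isLt; constructor <;> omega
  rw [extZ, dif_pos h]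
  exact congrArg f (Fin.ext (by simp))

lemma extZ_out {n : ℕ} (f : Fin (n+1) → ℝ) {k : ℤ} (h : ¬ (0 ≤ k ∧ k ≤ (n:ℤ))) :
    extZ f k = 0 := dif_neg h

lemma extZ_eq_sum {n : ℕ} (f : Fin (n+1) → ℝ) (k : ℤ) :
    extZ f k = ∑ i : Fin (n+1), if k = ((i:ℕ):ℤ) then f i else 0 := by
  by_cases h : 0 ≤ k ∧ k ≤ (n:ℤ)
  · have hk : k = ((((⟨k.toNat, by omega⟩ : Fin (n+1)) :ℕ)):ℤ) := by simp; omega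
    rw [extZ, dif_pos h, Finset.sum_eq_single (⟨k.toNat, by omega⟩ : Fin (n+1))]
    · rw [if_pos hk]
    · intro b _ hb
      rw [if_neg]
      intro hc
      exact hb (by ext; simp; omega)
    · intro hmem; exact absurd (Finset.mem_univ _) hmem
  · rw [extZ_out f h, eq_comm, Finset.sum_eq_zero]
    intro i _
    rw [if_neg]
    intro hc
    have := i.isLt
    omega

lemma extZ_ne_zero {n : ℕ} {f : Fin (n+1) → ℝ} {k : ℤ} (h : extZ f k ≠ 0) :
    ∃ i : Fin (n+1), ((i:ℕ):ℤ) = k ∧ f i ≠ 0 := by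
  by_cases hk : 0 ≤ k ∧ k ≤ (n:ℤ)
  · refine ⟨⟨k.toNat, by omega⟩, by simp; omega, ?_⟩
    rw [extZ, dif_pos hk] at h
    exact h
  · exact absurd (extZ_out f hk) h

lemma extZ_nonneg {n : ℕ} {f : Fin (n+1) → ℝ} (hf : ∀ i, 0 ≤ f i) (k : ℤ) :
    0 ≤ extZ f k := by
  rw [extZ]
  split
  · exact hf _
  · exact le_rfl

lemma xiOf_eq (w : ℤ) : xiOf mx ms PX θ w
    = ∑ s : Fin (ms+1), θ s * extZ PX (((s:ℕ):ℤ) - w) := by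
  rw [xiOf, Finset.sum_comm]
  refine Finset.sum_congr rfl fun s _ => ?_
  rw [extZ_eq_sum, Finset.mul_sum]
  refine Finset.sum_congr rfl fun x _ => ?_
  by_cases h : ((s:ℕ):ℤ) - ((x:ℕ):ℤ) = w
  · rw [if_pos h, if_pos (by omega), mul_comm]
  · rw [if_neg h, if_neg (by omega), mul_zero]

lemma xiOf_nonneg (hPX : ∀ i, 0 ≤ PX i) (hθ : ∀ i, 0 ≤ θ i) (w : ℤ) :
    0 ≤ xiOf mx ms PX θ w := by
  rw [xiOf_eq]
  exact Finset.sum_nonneg fun s _ => mul_nonneg (hθ s) (extZ_nonneg hPX _)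

lemma xiOf_pos (hPX : ∀ i, 0 ≤ PX i) (hθ : ∀ i, 0 ≤ θ i) {s : Fin (ms+1)} {w : ℤ}
    (hs : θ s ≠ 0) (hx : extZ PX (((s:ℕ):ℤ) - w) ≠ 0) :
    xiOf mx ms PX θ w ≠ 0 := by
  have hpos : 0 < θ s * extZ PX (((s:ℕ):ℤ) - w) :=
    lt_of_le_of_ne (mul_nonneg (hθ s) (extZ_nonneg hPX _)) (by
      exact fun hc => (mul_ne_zero hs hx) hc.symm)
  have hle : θ s * extZ PX (((s:ℕ):ℤ) - w) ≤ xiOf mx ms PX θ w := by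
    rw [xiOf_eq]
    exact Finset.single_le_sum
      (f := fun i : Fin (ms+1) => θ i * extZ PX (((i:ℕ):ℤ) - w))
      (fun i _ => mul_nonneg (hθ i) (extZ_nonneg hPX _)) (Finset.mem_univ s)
  exact ne_of_gt (lt_of_lt_of_le hpos hle)

lemma bstar_eq (w : ℤ) (y : Fin (my+1)) :
    bstar mx my ms PX θ w y
      = extZ PX ((y:ℕ):ℤ) * extZ θ (((y:ℕ):ℤ) + w) / xiOf mx ms PX θ w := by
  rw [bstar]
  split
  · rename_i h; rw [h, div_zero]
  · rfl

lemma bstar_ne_zero {w : ℤ} {y : Fin (my+1)} (h : bstar mx my ms PX θ w y ≠ 0) :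
    extZ PX ((y:ℕ):ℤ) ≠ 0 ∧ extZ θ (((y:ℕ):ℤ) + w) ≠ 0 ∧ xiOf mx ms PX θ w ≠ 0 := by
  rw [bstar_eq] at h
  obtain ⟨hnum, hden⟩ := div_ne_zero_iff.mp h
  obtain ⟨h1, h2⟩ := mul_ne_zero_iff.mp hnum
  exact ⟨h1, h2, hden⟩

lemma sum_indic_extPX (hxy : mx ≤ my) (k : ℤ) :
    (∑ y : Fin (my+1), if ((y:ℕ):ℤ) = k then extZ PX ((y:ℕ):ℤ) else 0)
      = extZ PX k := by
  by_cases h : 0 ≤ k ∧ k ≤ (my:ℤ)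
  · rw [Finset.sum_eq_single (⟨k.toNat, by omega⟩ : Fin (my+1))]
    · rw [if_pos (by simp; omega)]
      congr 1
      simp; omega
    · intro b _ hb
      rw [if_neg]
      intro hc
      exact hb (by ext; simp; omega)
    · intro hmem; exact absurd (Finset.mem_univ _) hmem
  · rw [extZ_out PX (by omega), Finset.sum_eq_zero]
    intro i _
    rw [if_neg]
    intro hc
    have := i.isLt
    omega

lemma sum_bstar_num (hxy : mx ≤ my) (w : ℤ) :
    (∑ y : Fin (my+1), extZ PX ((y:ℕ):ℤ) * extZ θ (((y:ℕ):ℤ) + w))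
      = xiOf mx ms PX θ w := by
  have hrw : ∀ y : Fin (my+1), extZ PX ((y:ℕ):ℤ) * extZ θ (((y:ℕ):ℤ) + w)
      = ∑ s : Fin (ms+1), if (((y:ℕ):ℤ)) = ((s:ℕ):ℤ) - w then extZ PX ((y:ℕ):ℤ) * θ s else 0 := by
    intro y
    rw [extZ_eq_sum θ, Finset.mul_sum]
    refine Finset.sum_congr rfl fun s _ => ?_
    by_cases h : ((y:ℕ):ℤ) + w = ((s:ℕ):ℤ)
    · rw [if_pos h, if_pos (by omega)]
    · rw [if_neg h, if_neg (by omega), mul_zero]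
  simp only [hrw]
  rw [Finset.sum_comm, xiOf_eq]
  refine Finset.sum_congr rfl fun s _ => ?_
  rw [← sum_indic_extPX (PX := PX) hxy (((s:ℕ):ℤ) - w), Finset.mul_sum]
  refine Finset.sum_congr rfl fun y _ => ?_
  split
  · ring
  · rw [mul_zero]

lemma sum_bstar (hxy : mx ≤ my) (w : ℤ) :
    (∑ y : Fin (my+1), bstar mx my ms PX θ w y)
      = if xiOf mx ms PX θ w = 0 then 0 else 1 := by
  simp only [bstar_eq]
  rw [← Finset.sum_div, sum_bstar_num hxy]
  split
  · rename_i h; rw [h, div_zero]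
  · rename_i h; exact div_self h

lemma bstar_sumform (w : ℤ) (c : Fin (my+1)) :
    bstar mx my ms PX θ w c
      = ∑ s : Fin (ms+1), if ((c:ℕ):ℤ) + w = ((s:ℕ):ℤ) then
          extZ PX ((c:ℕ):ℤ) * θ s / xiOf mx ms PX θ w else 0 := by
  rw [bstar_eq, extZ_eq_sum θ, Finset.mul_sum, Finset.sum_div]
  refine Finset.sum_congr rfl fun s _ => ?_
  split
  · rfl
  · rw [mul_zero, zero_div]

/-- The key stationarity computation. -/
lemma alg2 (hxy : mx ≤ my) (hPX : ∀ i, 0 ≤ PX i) (hθ : ∀ i, 0 ≤ θ i)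
    (c : Fin (my+1)) (F : ℤ → ℝ) :
    (∑ σ : Fin (ms+1), ∑ x : Fin (mx+1),
        θ σ * PX x * bstar mx my ms PX θ (((σ:ℕ):ℤ) - ((x:ℕ):ℤ)) c
          * F (((σ:ℕ):ℤ) - ((x:ℕ):ℤ) + ((c:ℕ):ℤ)))
      = extZ PX ((c:ℕ):ℤ) * ∑ s : Fin (ms+1), θ s * F ((s:ℕ):ℤ) := by
  have key : ∀ (σ : Fin (ms+1)) (x : Fin (mx+1)),
      θ σ * PX x * bstar mx my ms PX θ (((σ:ℕ):ℤ) - ((x:ℕ):ℤ)) c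
          * F (((σ:ℕ):ℤ) - ((x:ℕ):ℤ) + ((c:ℕ):ℤ))
      = ∑ s : Fin (ms+1), if ((σ:ℕ):ℤ) - ((x:ℕ):ℤ) = ((s:ℕ):ℤ) - ((c:ℕ):ℤ) then
          θ σ * PX x * (extZ PX ((c:ℕ):ℤ) * θ s /
            xiOf mx ms PX θ (((s:ℕ):ℤ) - ((c:ℕ):ℤ)) * F ((s:ℕ):ℤ)) else 0 := by
    intro σ x
    rw [bstar_sumform, Finset.mul_sum, Finset.sum_mul]
    refine Finset.sum_congr rfl fun s _ => ?_
    by_cases h : ((c:ℕ):ℤ) + (((σ:ℕ):ℤ) - ((x:ℕ):ℤ)) = ((s:ℕ):ℤ)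
    · rw [if_pos h, if_pos (by omega)]
      have h1 : ((σ:ℕ):ℤ) - ((x:ℕ):ℤ) = ((s:ℕ):ℤ) - ((c:ℕ):ℤ) := by omega
      have h2 : ((σ:ℕ):ℤ) - ((x:ℕ):ℤ) + ((c:ℕ):ℤ) = ((s:ℕ):ℤ) := by omega
      rw [h1, show ((s:ℕ):ℤ) - ((c:ℕ):ℤ) + ((c:ℕ):ℤ) = ((s:ℕ):ℤ) by ring]
      ring
    · rw [if_neg h, if_neg (by omega), mul_zero, zero_mul]
  simp only [key]
  have sw1 : ∀ σ : Fin (ms+1),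
      (∑ x : Fin (mx+1), ∑ s : Fin (ms+1), if ((σ:ℕ):ℤ) - ((x:ℕ):ℤ) = ((s:ℕ):ℤ) - ((c:ℕ):ℤ) then
          θ σ * PX x * (extZ PX ((c:ℕ):ℤ) * θ s /
            xiOf mx ms PX θ (((s:ℕ):ℤ) - ((c:ℕ):ℤ)) * F ((s:ℕ):ℤ)) else 0)
      = ∑ s : Fin (ms+1), ∑ x : Fin (mx+1), if ((σ:ℕ):ℤ) - ((x:ℕ):ℤ) = ((s:ℕ):ℤ) - ((c:ℕ):ℤ) then
          θ σ * PX x * (extZ PX ((c:ℕ):ℤ) * θ s /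
            xiOf mx ms PX θ (((s:ℕ):ℤ) - ((c:ℕ):ℤ)) * F ((s:ℕ):ℤ)) else 0 :=
    fun σ => Finset.sum_comm
  simp only [sw1]
  rw [Finset.sum_comm]
  have inner : ∀ s : Fin (ms+1),
      (∑ σ : Fin (ms+1), ∑ x : Fin (mx+1), if ((σ:ℕ):ℤ) - ((x:ℕ):ℤ) = ((s:ℕ):ℤ) - ((c:ℕ):ℤ) then
          θ σ * PX x * (extZ PX ((c:ℕ):ℤ) * θ s /
            xiOf mx ms PX θ (((s:ℕ):ℤ) - ((c:ℕ):ℤ)) * F ((s:ℕ):ℤ)) else 0)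
      = xiOf mx ms PX θ (((s:ℕ):ℤ) - ((c:ℕ):ℤ)) *
          (extZ PX ((c:ℕ):ℤ) * θ s /
            xiOf mx ms PX θ (((s:ℕ):ℤ) - ((c:ℕ):ℤ)) * F ((s:ℕ):ℤ)) := by
    intro s
    rw [Finset.sum_comm, xiOf, Finset.sum_mul]
    refine Finset.sum_congr rfl fun x _ => ?_
    rw [Finset.sum_mul]
    refine Finset.sum_congr rfl fun σ _ => ?_
    split
    · ring
    · rw [zero_mul]
  simp only [inner]
  rw [Finset.mul_sum]
  refine Finset.sum_congr rfl fun s _ => ?_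
  by_cases hξ : xiOf mx ms PX θ (((s:ℕ):ℤ) - ((c:ℕ):ℤ)) = 0
  · rw [hξ, zero_mul]
    by_cases hc : extZ PX ((c:ℕ):ℤ) = 0
    · rw [hc, zero_mul]
    · by_cases hs : θ s = 0
      · rw [hs]; ring
      · exact absurd (xiOf_pos hPX hθ hs (by
          rw [show ((s:ℕ):ℤ) - (((s:ℕ):ℤ) - ((c:ℕ):ℤ)) = ((c:ℕ):ℤ) by ring]
          exact hc)) (by exact fun h => h hξ)
  · field_simp

end BasicLemmas

section TrajLemmas

variable {mx my ms : ℕ} {PX : Fin (mx + 1) → ℝ} {θ : Fin (ms + 1) → ℝ}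

/-- The joint law induced by the structured policy, in product form. -/
noncomputable def pJ (mx my ms : ℕ) (PX : Fin (mx + 1) → ℝ) (θ : Fin (ms + 1) → ℝ)
    (T : ℕ) (ω : Traj mx my ms T) : ℝ :=
  θ ω.1 * ∏ t : Fin T, (PX (ω.2.1 t) * bstar mx my ms PX θ (Wat ω (t : ℕ)) (ω.2.2 t))

lemma Xat_lt {T : ℕ} (ω : Traj mx my ms T) {t : ℕ} (h : t < T) :
    Xat ω t = ((ω.2.1 ⟨t, h⟩ : ℕ) : ℤ) := dif_pos h

lemma Yat_lt {T : ℕ} (ω : Traj mx my ms T) {t : ℕ} (h : t < T) :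
    Yat ω t = ((ω.2.2 ⟨t, h⟩ : ℕ) : ℤ) := dif_pos h

lemma Sat_zero {T : ℕ} (ω : Traj mx my ms T) : Sat ω 0 = ((ω.1 : ℕ) : ℤ) := by
  simp [Sat]

lemma Sat_succ {T : ℕ} (ω : Traj mx my ms T) (t : ℕ) :
    Sat ω (t+1) = Sat ω t + (Yat ω t - Xat ω t) := by
  rw [Sat, Sat, Finset.sum_range_succ]
  ring

/-- Appending one step to a trajectory. -/
def snocT {T : ℕ} (ω : Traj mx my ms T) (c : Fin (mx+1)) (d : Fin (my+1)) :
    Traj mx my ms (T+1) :=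
  (ω.1, Fin.snoc ω.2.1 c, Fin.snoc ω.2.2 d)

lemma Xat_snocT {T : ℕ} (ω : Traj mx my ms T) (c : Fin (mx+1)) (d : Fin (my+1))
    {t : ℕ} (h : t < T) : Xat (snocT ω c d) t = Xat ω t := by
  rw [Xat_lt _ (Nat.lt_succ_of_lt h), Xat_lt _ h]
  rw [show (⟨t, Nat.lt_succ_of_lt h⟩ : Fin (T+1)) = Fin.castSucc ⟨t, h⟩ from rfl]
  rw [show (snocT ω c d).2.1 = Fin.snoc ω.2.1 c from rfl, Fin.snoc_castSucc]

lemma Yat_snocT {T : ℕ} (ω : Traj mx my ms T) (c : Fin (mx+1)) (d : Fin (my+1))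
    {t : ℕ} (h : t < T) : Yat (snocT ω c d) t = Yat ω t := by
  rw [Yat_lt _ (Nat.lt_succ_of_lt h), Yat_lt _ h]
  rw [show (⟨t, Nat.lt_succ_of_lt h⟩ : Fin (T+1)) = Fin.castSucc ⟨t, h⟩ from rfl]
  rw [show (snocT ω c d).2.2 = Fin.snoc ω.2.2 d from rfl, Fin.snoc_castSucc]

lemma Xat_snocT_last {T : ℕ} (ω : Traj mx my ms T) (c : Fin (mx+1)) (d : Fin (my+1)) :
    Xat (snocT ω c d) T = ((c : ℕ) : ℤ) := by
  rw [Xat_lt _ (Nat.lt_succ_self T)]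
  rw [show (⟨T, Nat.lt_succ_self T⟩ : Fin (T+1)) = Fin.last T from rfl]
  rw [show (snocT ω c d).2.1 = Fin.snoc ω.2.1 c from rfl, Fin.snoc_last]

lemma Yat_snocT_last {T : ℕ} (ω : Traj mx my ms T) (c : Fin (mx+1)) (d : Fin (my+1)) :
    Yat (snocT ω c d) T = ((d : ℕ) : ℤ) := by
  rw [Yat_lt _ (Nat.lt_succ_self T)]
  rw [show (⟨T, Nat.lt_succ_self T⟩ : Fin (T+1)) = Fin.last T from rfl]
  rw [show (snocT ω c d).2.2 = Fin.snoc ω.2.2 d from rfl, Fin.snoc_last]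

lemma Sat_snocT {T : ℕ} (ω : Traj mx my ms T) (c : Fin (mx+1)) (d : Fin (my+1))
    {t : ℕ} (h : t ≤ T) : Sat (snocT ω c d) t = Sat ω t := by
  rw [Sat, Sat]
  congr 1
  refine Finset.sum_congr rfl fun i hi => ?_
  have hi' : i < T := lt_of_lt_of_le (Finset.mem_range.mp hi) h
  rw [Xat_snocT _ _ _ hi', Yat_snocT _ _ _ hi']

lemma Wat_snocT {T : ℕ} (ω : Traj mx my ms T) (c : Fin (mx+1)) (d : Fin (my+1))
    {t : ℕ} (h : t < T) : Wat (snocT ω c d) t = Wat ω t := by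
  rw [Wat, Wat, Sat_snocT _ _ _ (le_of_lt h), Xat_snocT _ _ _ h]

lemma Wat_snocT_last {T : ℕ} (ω : Traj mx my ms T) (c : Fin (mx+1)) (d : Fin (my+1)) :
    Wat (snocT ω c d) T = Sat ω T - ((c : ℕ) : ℤ) := by
  rw [Wat, Sat_snocT _ _ _ (le_refl T), Xat_snocT_last]

lemma Sat_snocT_succ {T : ℕ} (ω : Traj mx my ms T) (c : Fin (mx+1)) (d : Fin (my+1)) :
    Sat (snocT ω c d) (T+1) = Sat ω T - ((c : ℕ) : ℤ) + ((d : ℕ) : ℤ) := by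
  rw [Sat_succ, Sat_snocT _ _ _ (le_refl T), Xat_snocT_last, Yat_snocT_last]
  ring

/-- Equivalence used to sum over trajectories of horizon `T+1`. -/
noncomputable def trajEquiv (mx my ms T : ℕ) :
    (Traj mx my ms T × (Fin (mx+1) × Fin (my+1))) ≃ Traj mx my ms (T+1) where
  toFun p := snocT p.1 p.2.1 p.2.2
  invFun ω := ((ω.1, Fin.init ω.2.1, Fin.init ω.2.2),
    (ω.2.1 (Fin.last T), ω.2.2 (Fin.last T)))
  left_inv p := by
    obtain ⟨⟨s, x, y⟩, c, d⟩ := p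
    simp [snocT, Fin.init_snoc, Fin.snoc_last]
  right_inv ω := by
    obtain ⟨s, x, y⟩ := ω
    simp [snocT, Fin.snoc_init_self]

lemma sum_traj_succ {T : ℕ} (f : Traj mx my ms (T+1) → ℝ) :
    ∑ ω, f ω = ∑ ω : Traj mx my ms T, ∑ c : Fin (mx+1), ∑ d : Fin (my+1),
      f (snocT ω c d) := by
  rw [← Equiv.sum_comp (trajEquiv mx my ms T) f, Fintype.sum_prod_type]
  refine Finset.sum_congr rfl fun ω _ => ?_
  rw [Fintype.sum_prod_type]
  rfl

lemma sum_traj_zero (f : Traj mx my ms 0 → ℝ) :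
    ∑ ω, f ω = ∑ s : Fin (ms+1), f (s, (fun i => i.elim0), (fun i => i.elim0)) := by
  rw [Fintype.sum_prod_type]
  refine Finset.sum_congr rfl fun s _ => ?_
  rw [Fintype.sum_prod_type]
  rw [Fintype.sum_unique, Fintype.sum_unique]
  exact congrArg f (Prod.ext_iff.mpr ⟨rfl, Subsingleton.elim _ _⟩)

lemma pJ_zero (ω : Traj mx my ms 0) : pJ mx my ms PX θ 0 ω = θ ω.1 := by
  rw [pJ]
  simp

lemma pJ_snocT {T : ℕ} (ω : Traj mx my ms T) (c : Fin (mx+1)) (d : Fin (my+1)) :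
    pJ mx my ms PX θ (T+1) (snocT ω c d)
      = pJ mx my ms PX θ T ω
        * (PX c * bstar mx my ms PX θ (Sat ω T - ((c:ℕ):ℤ)) d) := by
  rw [pJ, pJ, Fin.prod_univ_castSucc, ← mul_assoc]
  congr 1
  · congr 1
    refine Finset.prod_congr rfl fun i _ => ?_
    have h3 : Wat (snocT ω c d) ((i.castSucc : Fin (T+1)) : ℕ) = Wat ω (i : ℕ) := by
      rw [Fin.coe_castSucc, Wat_snocT _ _ _ i.isLt]
    rw [show (snocT ω c d).2.1 = Fin.snoc ω.2.1 c from rfl,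
      show (snocT ω c d).2.2 = Fin.snoc ω.2.2 d from rfl, Fin.snoc_castSucc,
      Fin.snoc_castSucc, h3]
  · have h3 : Wat (snocT ω c d) ((Fin.last T : Fin (T+1)) : ℕ) = Sat ω T - ((c:ℕ):ℤ) := by
      rw [Fin.val_last, Wat_snocT_last]
    rw [show (snocT ω c d).2.1 = Fin.snoc ω.2.1 c from rfl,
      show (snocT ω c d).2.2 = Fin.snoc ω.2.2 d from rfl, Fin.snoc_last,
      Fin.snoc_last, h3]

/-- support lemma: at a trajectory of positive weight the final state is in `𝒮` and
has positive `θ`-mass. -/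
lemma supp_Sat {T : ℕ} (hPX : ∀ i, 0 ≤ PX i) (hθ : ∀ i, 0 ≤ θ i)
    (ω : Traj mx my ms T) (h : pJ mx my ms PX θ T ω ≠ 0) :
    extZ θ (Sat ω T) ≠ 0 := by
  cases T with
  | zero =>
      rw [Sat_zero, extZ_coe]
      rw [pJ] at h
      exact fun hc => h (by rw [hc, zero_mul])
  | succ T =>
      rw [pJ] at h
      have hprod : (∏ t : Fin (T+1),
          (PX (ω.2.1 t) * bstar mx my ms PX θ (Wat ω (t:ℕ)) (ω.2.2 t))) ≠ 0 :=
        right_ne_zero_of_mul h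
      have hlast := Finset.prod_ne_zero_iff.mp hprod (Fin.last T) (Finset.mem_univ _)
      have hb : bstar mx my ms PX θ (Wat ω T) (ω.2.2 (Fin.last T)) ≠ 0 := by
        have := right_ne_zero_of_mul hlast
        rwa [Fin.val_last] at this
      obtain ⟨-, hθne, -⟩ := bstar_ne_zero hb
      have harg : ((ω.2.2 (Fin.last T) : ℕ) : ℤ) + Wat ω T = Sat ω (T+1) := by
        rw [Wat, Sat_succ, Yat_lt ω (Nat.lt_succ_self T)]
        rw [show (⟨T, Nat.lt_succ_self T⟩ : Fin (T+1)) = Fin.last T from rfl]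
        ring
      rwa [harg] at hθne

/-- marginalization of the last step. -/
lemma marg {T : ℕ} (hxy : mx ≤ my) (hPX : IsPMF PX) (hθ : IsPMF θ)
    (F : Traj mx my ms T → ℝ) :
    ∑ ω : Traj mx my ms (T+1), pJ mx my ms PX θ (T+1) ω
        * F (ω.1, Fin.init ω.2.1, Fin.init ω.2.2)
      = ∑ ω : Traj mx my ms T, pJ mx my ms PX θ T ω * F ω := by
  rw [sum_traj_succ]
  refine Finset.sum_congr rfl fun ω _ => ?_
  have htr : ∀ (c : Fin (mx+1)) (d : Fin (my+1)),
      ((snocT ω c d).1, Fin.init (snocT ω c d).2.1, Fin.init (snocT ω c d).2.2) = ω := by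
    intro c d
    obtain ⟨s, x, y⟩ := ω
    simp [snocT, Fin.init_snoc]
  by_cases hp : pJ mx my ms PX θ T ω = 0
  · rw [hp, zero_mul, Finset.sum_eq_zero]
    intro c _
    rw [Finset.sum_eq_zero]
    intro d _
    rw [pJ_snocT, hp, zero_mul, zero_mul]
  · obtain ⟨s0, hs0, hθ0⟩ := extZ_ne_zero (supp_Sat hPX.1 hθ.1 ω hp)
    calc ∑ c : Fin (mx+1), ∑ d : Fin (my+1),
          pJ mx my ms PX θ (T+1) (snocT ω c d)
            * F ((snocT ω c d).1, Fin.init (snocT ω c d).2.1, Fin.init (snocT ω c d).2.2)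
        = ∑ c : Fin (mx+1), PX c * (pJ mx my ms PX θ T ω * F ω) := by
          refine Finset.sum_congr rfl fun c _ => ?_
          have : ∀ d : Fin (my+1), pJ mx my ms PX θ (T+1) (snocT ω c d)
              * F ((snocT ω c d).1, Fin.init (snocT ω c d).2.1, Fin.init (snocT ω c d).2.2)
              = pJ mx my ms PX θ T ω * F ω * PX c
                * bstar mx my ms PX θ (Sat ω T - ((c:ℕ):ℤ)) d := by
            intro d
            rw [htr c d, pJ_snocT]
            ring
          simp only [this]
          rw [← Finset.mul_sum, sum_bstar hxy]
          by_cases hc : PX c = 0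
          · rw [hc]; ring
          · rw [if_neg (xiOf_pos hPX.1 hθ.1 hθ0 (by
              rw [show ((s0:ℕ):ℤ) - (Sat ω T - ((c:ℕ):ℤ)) = ((c:ℕ):ℤ) by omega, extZ_coe]
              exact hc))]
            ring
      _ = pJ mx my ms PX θ T ω * F ω := by
          rw [← Finset.sum_mul, hPX.2, one_mul]

end TrajLemmas

section TrajLemmas2

variable {mx my ms : ℕ} {PX : Fin (mx + 1) → ℝ} {θ : Fin (ms + 1) → ℝ}

/-- Restriction of a trajectory to a shorter horizon. -/
def resT {T t : ℕ} (h : t ≤ T) (ω : Traj mx my ms T) : Traj mx my ms t :=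
  (ω.1, fun i => ω.2.1 (Fin.castLE h i), fun i => ω.2.2 (Fin.castLE h i))

lemma Xat_resT {T t : ℕ} (h : t ≤ T) (ω : Traj mx my ms T) {i : ℕ} (hi : i < t) :
    Xat (resT h ω) i = Xat ω i := by
  rw [Xat_lt _ hi, Xat_lt _ (lt_of_lt_of_le hi h)]
  rfl

lemma Yat_resT {T t : ℕ} (h : t ≤ T) (ω : Traj mx my ms T) {i : ℕ} (hi : i < t) :
    Yat (resT h ω) i = Yat ω i := by
  rw [Yat_lt _ hi, Yat_lt _ (lt_of_lt_of_le hi h)]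
  rfl

lemma Sat_resT {T t : ℕ} (h : t ≤ T) (ω : Traj mx my ms T) {i : ℕ} (hi : i ≤ t) :
    Sat (resT h ω) i = Sat ω i := by
  rw [Sat, Sat]
  congr 1
  refine Finset.sum_congr rfl fun j hj => ?_
  have hj' : j < t := lt_of_lt_of_le (Finset.mem_range.mp hj) hi
  rw [Xat_resT h ω hj', Yat_resT h ω hj']

lemma resT_self {T : ℕ} (ω : Traj mx my ms T) : resT (le_refl T) ω = ω := by
  obtain ⟨s, x, y⟩ := ω
  refine Prod.ext_iff.mpr ⟨rfl, Prod.ext_iff.mpr ⟨?_, ?_⟩⟩ <;>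
    exact funext fun i => congrArg _ (Fin.ext rfl)

lemma resT_trunc {T t : ℕ} (h' : t ≤ T) (ω : Traj mx my ms (T+1)) :
    resT (h'.trans (Nat.le_succ T)) ω = resT h' (ω.1, Fin.init ω.2.1, Fin.init ω.2.2) := by
  refine Prod.ext_iff.mpr ⟨rfl, Prod.ext_iff.mpr ⟨?_, ?_⟩⟩ <;>
    exact funext fun i => congrArg _ (Fin.ext rfl)

lemma tr {T t : ℕ} (hxy : mx ≤ my) (hPX : IsPMF PX) (hθ : IsPMF θ)
    (h : t ≤ T) (G : Traj mx my ms t → ℝ) :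
    ∑ ω : Traj mx my ms T, pJ mx my ms PX θ T ω * G (resT h ω)
      = ∑ ω : Traj mx my ms t, pJ mx my ms PX θ t ω * G ω := by
  induction T with
  | zero =>
      have ht : t = 0 := Nat.le_zero.mp h
      subst ht
      simp only [resT_self]
  | succ T ih =>
      by_cases ht : t = T + 1
      · subst ht
        simp only [resT_self]
      · have h' : t ≤ T := by omega
        have hrw : ∀ ω : Traj mx my ms (T+1),
            G (resT h ω) = G (resT h' (ω.1, Fin.init ω.2.1, Fin.init ω.2.2)) := by
          intro ω
          have h2 := resT_trunc (mx := mx) (my := my) (ms := ms) h' ω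
          have h3 : resT h ω = resT (h'.trans (Nat.le_succ T)) ω := rfl
          rw [h3, h2]
        simp only [hrw]
        rw [marg hxy hPX hθ (fun ω' => G (resT h' ω'))]
        exact ih h'

lemma snoc_eq_iff {n : ℕ} {α : Type*} (a : Fin n → α) (d : α) (y : Fin (n+1) → α) :
    Fin.snoc a d = y ↔ a = Fin.init y ∧ d = y (Fin.last n) := by
  constructor
  · rintro rfl
    exact ⟨by simp, by simp⟩
  · rintro ⟨rfl, rfl⟩
    exact Fin.snoc_init_self y

/-- Conditional law of `S_T` given `Y^T = y`: output i.i.d. and state independent. -/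
lemma keyK (hxy : mx ≤ my) (hPX : IsPMF PX) (hθ : IsPMF θ) :
    ∀ {T : ℕ} (y : Fin T → Fin (my+1)) (F : ℤ → ℝ),
    (∑ ω : Traj mx my ms T, (if ω.2.2 = y then pJ mx my ms PX θ T ω else 0) * F (Sat ω T))
      = (∏ t : Fin T, extZ PX ((y t : ℕ) : ℤ))
          * ∑ s : Fin (ms+1), θ s * F ((s : ℕ) : ℤ) := by
  intro T
  induction T with
  | zero =>
      intro y F
      rw [sum_traj_zero]
      simp only [pJ_zero, Sat_zero]
      rw [Finset.univ_eq_empty (α := Fin 0), Finset.prod_empty, one_mul]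
      refine Finset.sum_congr rfl fun s _ => ?_
      rw [if_pos (Subsingleton.elim _ _)]
  | succ T ih =>
      intro y F
      rw [sum_traj_succ]
      have step : ∀ (ω : Traj mx my ms T) (c : Fin (mx+1)),
          (∑ d : Fin (my+1),
            (if (snocT ω c d).2.2 = y then pJ mx my ms PX θ (T+1) (snocT ω c d) else 0)
              * F (Sat (snocT ω c d) (T+1)))
          = (if ω.2.2 = Fin.init y then pJ mx my ms PX θ T ω else 0)
              * (PX c * bstar mx my ms PX θ (Sat ω T - ((c:ℕ):ℤ)) (y (Fin.last T))
                  * F (Sat ω T - ((c:ℕ):ℤ) + ((y (Fin.last T) : ℕ) : ℤ))) := by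
        intro ω c
        have hcond : ∀ d : Fin (my+1), ((snocT ω c d).2.2 = y)
            = (ω.2.2 = Fin.init y ∧ d = y (Fin.last T)) := by
          intro d
          rw [show (snocT ω c d).2.2 = Fin.snoc ω.2.2 d from rfl]
          rw [eq_iff_iff]
          exact snoc_eq_iff _ _ _
        have hterm : ∀ d : Fin (my+1),
            (if (snocT ω c d).2.2 = y then pJ mx my ms PX θ (T+1) (snocT ω c d) else 0)
              * F (Sat (snocT ω c d) (T+1))
            = (if d = y (Fin.last T) then
                (if ω.2.2 = Fin.init y then pJ mx my ms PX θ T ω else 0)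
                  * (PX c * bstar mx my ms PX θ (Sat ω T - ((c:ℕ):ℤ)) d
                      * F (Sat ω T - ((c:ℕ):ℤ) + ((d : ℕ) : ℤ))) else 0) := by
          intro d
          simp only [hcond, pJ_snocT, Sat_snocT_succ]
          by_cases h1 : ω.2.2 = Fin.init y
          · by_cases h2 : d = y (Fin.last T)
            · rw [if_pos ⟨h1, h2⟩, if_pos h2, if_pos h1]
              ring
            · rw [if_neg (fun hc => h2 hc.2), if_neg h2, zero_mul]
          · by_cases h2 : d = y (Fin.last T)
            · rw [if_neg (fun hc => h1 hc.1), if_pos h2, if_neg h1, zero_mul, zero_mul]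
            · rw [if_neg (fun hc => h2 hc.2), if_neg h2, zero_mul]
        simp only [hterm]
        rw [Finset.sum_ite_eq' Finset.univ (y (Fin.last T))]
        exact if_pos (Finset.mem_univ _)
      simp only [step]
      have hIH := ih (Fin.init y) (fun σ : ℤ => ∑ c : Fin (mx+1),
          PX c * bstar mx my ms PX θ (σ - ((c:ℕ):ℤ)) (y (Fin.last T))
            * F (σ - ((c:ℕ):ℤ) + ((y (Fin.last T) : ℕ) : ℤ)))
      have pull : ∀ ω : Traj mx my ms T,
          (∑ c : Fin (mx+1),
            (if ω.2.2 = Fin.init y then pJ mx my ms PX θ T ω else 0)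
              * (PX c * bstar mx my ms PX θ (Sat ω T - ((c:ℕ):ℤ)) (y (Fin.last T))
                  * F (Sat ω T - ((c:ℕ):ℤ) + ((y (Fin.last T) : ℕ) : ℤ))))
          = (if ω.2.2 = Fin.init y then pJ mx my ms PX θ T ω else 0)
              * ∑ c : Fin (mx+1),
                  PX c * bstar mx my ms PX θ (Sat ω T - ((c:ℕ):ℤ)) (y (Fin.last T))
                    * F (Sat ω T - ((c:ℕ):ℤ) + ((y (Fin.last T) : ℕ) : ℤ)) := by
        intro ω
        rw [Finset.mul_sum]
      simp only [pull]
      rw [hIH]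
      have halg : (∑ σ : Fin (ms+1), θ σ *
          (∑ c : Fin (mx+1),
            PX c * bstar mx my ms PX θ (((σ:ℕ):ℤ) - ((c:ℕ):ℤ)) (y (Fin.last T))
              * F (((σ:ℕ):ℤ) - ((c:ℕ):ℤ) + ((y (Fin.last T) : ℕ) : ℤ))))
          = extZ PX ((y (Fin.last T) : ℕ) : ℤ) * ∑ s : Fin (ms+1), θ s * F ((s:ℕ):ℤ) := by
        rw [← alg2 hxy hPX.1 hθ.1 (y (Fin.last T)) F]
        refine Finset.sum_congr rfl fun σ _ => ?_
        rw [Finset.mul_sum]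
        refine Finset.sum_congr rfl fun x _ => ?_
        ring
      rw [halg, Fin.prod_univ_castSucc]
      have hin : ∀ t : Fin T, Fin.init y t = y t.castSucc := fun t => rfl
      simp only [hin]
      ring

lemma sum_extPX (hxy : mx ≤ my) (hPX : IsPMF PX) :
    (∑ c : Fin (my+1), extZ PX ((c:ℕ):ℤ)) = 1 := by
  have h1 : ∀ c : Fin (my+1), extZ PX ((c:ℕ):ℤ)
      = ∑ x : Fin (mx+1), if ((c:ℕ):ℤ) = ((x:ℕ):ℤ) then PX x else 0 :=
    fun c => extZ_eq_sum PX _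
  simp only [h1]
  rw [Finset.sum_comm]
  have inner : ∀ x : Fin (mx+1),
      (∑ c : Fin (my+1), if ((c:ℕ):ℤ) = ((x:ℕ):ℤ) then PX x else 0) = PX x := by
    intro x
    have := x.isLt
    rw [Finset.sum_eq_single (⟨(x:ℕ), by omega⟩ : Fin (my+1))]
    · rw [if_pos (by simp)]
    · intro b _ hb
      rw [if_neg]
      intro hc
      exact hb (by ext; simp; omega)
    · intro hmem; exact absurd (Finset.mem_univ _) hmem
  simp only [inner]
  exact hPX.2

/-- Law of `S_T` at horizon `T` is `θ`. -/
lemma lawS (hxy : mx ≤ my) (hPX : IsPMF PX) (hθ : IsPMF θ) {T : ℕ} (F : ℤ → ℝ) :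
    ∑ ω : Traj mx my ms T, pJ mx my ms PX θ T ω * F (Sat ω T)
      = ∑ s : Fin (ms+1), θ s * F ((s:ℕ):ℤ) := by
  have ins : ∀ ω : Traj mx my ms T,
      pJ mx my ms PX θ T ω * F (Sat ω T)
        = ∑ y : Fin T → Fin (my+1),
            (if ω.2.2 = y then pJ mx my ms PX θ T ω else 0) * F (Sat ω T) := by
    intro ω
    rw [← Finset.sum_mul, Finset.sum_ite_eq Finset.univ ω.2.2 (fun _ => pJ mx my ms PX θ T ω),
      if_pos (Finset.mem_univ _)]
  simp only [ins]
  rw [Finset.sum_comm]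
  have hky : ∀ y : Fin T → Fin (my+1),
      (∑ ω : Traj mx my ms T,
        (if ω.2.2 = y then pJ mx my ms PX θ T ω else 0) * F (Sat ω T))
      = (∏ t : Fin T, extZ PX ((y t : ℕ) : ℤ)) * ∑ s : Fin (ms+1), θ s * F ((s:ℕ):ℤ) :=
    fun y => keyK hxy hPX hθ y F
  simp only [hky]
  rw [← Finset.sum_mul]
  have h2 : (∏ _t : Fin T, (∑ c : Fin (my+1), extZ PX ((c:ℕ):ℤ))) = 1 :=
    Finset.prod_eq_one (fun _ _ => sum_extPX hxy hPX)
  rw [Finset.prod_univ_sum] at h2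
  rw [Fintype.piFinset_univ] at h2
  rw [h2, one_mul]

lemma lawS_T (hxy : mx ≤ my) (hPX : IsPMF PX) (hθ : IsPMF θ) {T t : ℕ} (ht : t ≤ T)
    (F : ℤ → ℝ) :
    ∑ ω : Traj mx my ms T, pJ mx my ms PX θ T ω * F (Sat ω t)
      = ∑ s : Fin (ms+1), θ s * F ((s:ℕ):ℤ) := by
  have hrw : ∀ ω : Traj mx my ms T, F (Sat ω t) = F (Sat (resT ht ω) t) := by
    intro ω
    rw [Sat_resT ht ω (le_refl t)]
  simp only [hrw]
  rw [tr hxy hPX hθ ht (fun ω' => F (Sat ω' t))]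
  exact lawS hxy hPX hθ F

/-- Joint law of `(S_t, X_t)` is `θ ⊗ PX`. -/
lemma lawSX (hxy : mx ≤ my) (hPX : IsPMF PX) (hθ : IsPMF θ) {t : ℕ}
    (g : ℤ → Fin (mx+1) → ℝ) :
    ∑ ω : Traj mx my ms (t+1), pJ mx my ms PX θ (t+1) ω
        * g (Sat ω t) (ω.2.1 (Fin.last t))
      = ∑ σ : Fin (ms+1), θ σ * ∑ x : Fin (mx+1), PX x * g ((σ:ℕ):ℤ) x := by
  rw [sum_traj_succ]
  have step : ∀ ω : Traj mx my ms t,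
      (∑ c : Fin (mx+1), ∑ d : Fin (my+1),
        pJ mx my ms PX θ (t+1) (snocT ω c d)
          * g (Sat (snocT ω c d) t) ((snocT ω c d).2.1 (Fin.last t)))
      = pJ mx my ms PX θ t ω * ∑ c : Fin (mx+1), PX c * g (Sat ω t) c := by
    intro ω
    have hco : ∀ (c : Fin (mx+1)) (d : Fin (my+1)),
        pJ mx my ms PX θ (t+1) (snocT ω c d)
          * g (Sat (snocT ω c d) t) ((snocT ω c d).2.1 (Fin.last t))
        = pJ mx my ms PX θ t ω * PX c * g (Sat ω t) c
            * bstar mx my ms PX θ (Sat ω t - ((c:ℕ):ℤ)) d := by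
      intro c d
      rw [pJ_snocT, Sat_snocT _ _ _ (le_refl t),
        show (snocT ω c d).2.1 = Fin.snoc ω.2.1 c from rfl, Fin.snoc_last]
      ring
    simp only [hco]
    by_cases hp : pJ mx my ms PX θ t ω = 0
    · rw [hp]
      simp
    · obtain ⟨s0, hs0, hθ0⟩ := extZ_ne_zero (supp_Sat hPX.1 hθ.1 ω hp)
      rw [Finset.mul_sum]
      refine Finset.sum_congr rfl fun c _ => ?_
      rw [← Finset.mul_sum, sum_bstar hxy]
      by_cases hc : PX c = 0
      · rw [hc]; ring
      · rw [if_neg (xiOf_pos hPX.1 hθ.1 hθ0 (by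
          rw [show ((s0:ℕ):ℤ) - (Sat ω t - ((c:ℕ):ℤ)) = ((c:ℕ):ℤ) by omega, extZ_coe]
          exact hc))]
        ring
  simp only [step]
  have final := lawS (mx := mx) (my := my) hxy hPX hθ (T := t)
    (fun σ : ℤ => ∑ c : Fin (mx+1), PX c * g σ c)
  exact final

lemma lawSX_T (hxy : mx ≤ my) (hPX : IsPMF PX) (hθ : IsPMF θ) {T t : ℕ} (ht : t < T)
    (g : ℤ → Fin (mx+1) → ℝ) :
    ∑ ω : Traj mx my ms T, pJ mx my ms PX θ T ω * g (Sat ω t) (ω.2.1 ⟨t, ht⟩)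
      = ∑ σ : Fin (ms+1), θ σ * ∑ x : Fin (mx+1), PX x * g ((σ:ℕ):ℤ) x := by
  have h1 : t + 1 ≤ T := ht
  have hrw : ∀ ω : Traj mx my ms T,
      g (Sat ω t) (ω.2.1 ⟨t, ht⟩)
        = g (Sat (resT h1 ω) t) ((resT h1 ω).2.1 (Fin.last t)) := by
    intro ω
    rw [Sat_resT h1 ω (Nat.le_succ t)]
    rfl
  simp only [hrw]
  rw [tr hxy hPX hθ h1 (fun ω' => g (Sat ω' t) (ω'.2.1 (Fin.last t)))]
  exact lawSX hxy hPX hθ g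

end TrajLemmas2

section EntLemmas

variable {Ω α β : Type*} [Fintype Ω] [DecidableEq α] [DecidableEq β]

lemma pr_eq_sum_ite (p : Ω → ℝ) (Z : Ω → α) (z : α) :
    pr p Z z = ∑ ω, if Z ω = z then p ω else 0 := by
  rw [pr, Finset.sum_filter]

lemma ent_pointwise (p : Ω → ℝ) (Z : Ω → α) :
    ent p Z = -∑ ω, p ω * Real.logb 2 (pr p Z (Z ω)) := by
  rw [ent]
  congr 1
  rw [← Finset.sum_fiberwise_of_maps_to (g := Z) (t := Finset.univ.image Z)
    (fun ω _ => Finset.mem_image_of_mem Z (Finset.mem_univ ω))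
    (fun ω => p ω * Real.logb 2 (pr p Z (Z ω)))]
  refine Finset.sum_congr rfl fun z _ => ?_
  calc pr p Z z * Real.logb 2 (pr p Z z)
      = ∑ ω ∈ Finset.univ.filter (fun ω => Z ω = z), p ω * Real.logb 2 (pr p Z z) := by
        rw [pr, Finset.sum_mul]
    _ = ∑ ω ∈ Finset.univ.filter (fun ω => Z ω = z), p ω * Real.logb 2 (pr p Z (Z ω)) :=
        Finset.sum_congr rfl fun ω hω => by rw [(Finset.mem_filter.mp hω).2]

lemma pr_inj (p : Ω → ℝ) (Z : Ω → α) (hZ : Function.Injective Z) (ω : Ω) :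
    pr p Z (Z ω) = p ω := by
  rw [pr]
  have hfe : Finset.univ.filter (fun ω' => Z ω' = Z ω) = {ω} := by
    ext ω'
    simp [hZ.eq_iff]
  rw [hfe, Finset.sum_singleton]

lemma ent_comp_inj (p : Ω → ℝ) (Z : Ω → α) (g : α → β) (hg : Function.Injective g) :
    ent p (fun ω => g (Z ω)) = ent p Z := by
  rw [ent, ent]
  congr 1
  have himg : Finset.univ.image (fun ω => g (Z ω)) = (Finset.univ.image Z).image g := by
    rw [Finset.image_image]
    rfl
  rw [himg, Finset.sum_image (fun a _ b _ h => hg h)]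
  refine Finset.sum_congr rfl fun z _ => ?_
  have hpr : pr p (fun ω => g (Z ω)) (g z) = pr p Z z := by
    rw [pr, pr]
    congr 1
    ext ω'
    simp [hg.eq_iff]
  rw [hpr]

end EntLemmas

section JointLemmas

variable {mx my ms : ℕ} {PX : Fin (mx + 1) → ℝ} {θ : Fin (ms + 1) → ℝ}

lemma hstate_eq {T : ℕ} (ω : Traj mx my ms T) (t : Fin T) :
    hstate ω.1 (prefX ω t) (prefY ω t) = Sat ω (t : ℕ) := by
  rw [hstate, Sat]
  congr 1
  have hterm : ∀ i : Fin (t : ℕ),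
      ((prefY ω t i : ℕ) : ℤ) - ((prefX ω t i.castSucc : ℕ) : ℤ)
        = (fun n : ℕ => Yat ω n - Xat ω n) ((i : ℕ)) := by
    intro i
    have hiT : (i : ℕ) < T := lt_trans i.isLt t.isLt
    show ((prefY ω t i : ℕ) : ℤ) - ((prefX ω t i.castSucc : ℕ) : ℤ) = Yat ω i - Xat ω i
    rw [Yat_lt ω hiT, Xat_lt ω hiT]
    rfl
  rw [Finset.sum_congr rfl (fun i _ => hterm i), Fin.sum_univ_eq_sum_range
    (fun n : ℕ => Yat ω n - Xat ω n) (t : ℕ)]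

lemma jointA_eq_pJ (T : ℕ) :
    jointA (mx := mx) (my := my) (ms := ms) θ PX (structuredPolicyA mx my ms PX θ) T
      = pJ mx my ms PX θ T := by
  funext ω
  rw [jointA, pJ]
  congr 1
  refine Finset.prod_congr rfl fun t _ => ?_
  congr 1
  show bstar mx my ms PX θ
      (hstate ω.1 (prefX ω t) (prefY ω t) - ((prefX ω t (Fin.last (t : ℕ)) : ℕ) : ℤ))
      (ω.2.2 t) = bstar mx my ms PX θ (Wat ω (t : ℕ)) (ω.2.2 t)
  rw [hstate_eq, Wat, Xat_lt ω t.isLt]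
  rfl

/-- Expectation of a function of `S₁ = ω.1`. -/
lemma lawS1 (hxy : mx ≤ my) (hPX : IsPMF PX) (hθ : IsPMF θ) {T : ℕ} (f : Fin (ms + 1) → ℝ) :
    ∑ ω : Traj mx my ms T, pJ mx my ms PX θ T ω * f ω.1
      = ∑ s : Fin (ms+1), θ s * f s := by
  have hrw : ∀ ω : Traj mx my ms T,
      f ω.1 = (fun ω0 : Traj mx my ms 0 => f ω0.1) (resT (Nat.zero_le T) ω) := fun ω => rfl
  simp only [hrw]
  have htr := tr (mx := mx) (my := my) (ms := ms) hxy hPX hθ (Nat.zero_le T)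
    (fun ω0 : Traj mx my ms 0 => f ω0.1)
  rw [htr, sum_traj_zero (fun ω0 : Traj mx my ms 0 => pJ mx my ms PX θ 0 ω0 * f ω0.1)]
  simp only [pJ_zero]

/-- Expectation of a function of `(W_t, X_t)`. -/
lemma lawWX (hxy : mx ≤ my) (hPX : IsPMF PX) (hθ : IsPMF θ) {T t : ℕ} (ht : t < T) (g : ℤ → ℤ → ℝ) :
    ∑ ω : Traj mx my ms T, pJ mx my ms PX θ T ω * g (Wat ω t) (Xat ω t)
      = ∑ σ : Fin (ms+1), θ σ * ∑ x : Fin (mx+1),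
          PX x * g (((σ:ℕ):ℤ) - ((x:ℕ):ℤ)) ((x:ℕ):ℤ) := by
  have hrw : ∀ ω : Traj mx my ms T,
      g (Wat ω t) (Xat ω t)
        = (fun σ (x : Fin (mx+1)) => g (σ - ((x:ℕ):ℤ)) ((x:ℕ):ℤ)) (Sat ω t)
            (ω.2.1 ⟨t, ht⟩) := by
    intro ω
    rw [Wat, Xat_lt ω ht]
  simp only [hrw]
  have hsx := lawSX_T (mx := mx) (my := my) (ms := ms) hxy hPX hθ ht
    (fun σ (x : Fin (mx+1)) => g (σ - ((x:ℕ):ℤ)) ((x:ℕ):ℤ))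
  exact hsx

lemma prS1 (hxy : mx ≤ my) (hPX : IsPMF PX) (hθ : IsPMF θ) {T : ℕ} (s : Fin (ms+1)) :
    pr (pJ mx my ms PX θ T) (fun ω => ω.1) s = θ s := by
  rw [pr_eq_sum_ite]
  have hrw : ∀ ω : Traj mx my ms T,
      (if ω.1 = s then pJ mx my ms PX θ T ω else 0)
        = pJ mx my ms PX θ T ω * (fun s' : Fin (ms+1) => if s' = s then (1:ℝ) else 0) ω.1 := by
    intro ω
    by_cases h : ω.1 = s <;> simp [h]
  simp only [hrw]
  have hS := lawS1 (T := T) hxy hPX hθ (fun s' : Fin (ms+1) => if s' = s then (1:ℝ) else 0)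
  rw [hS]
  simp only [mul_ite, mul_one, mul_zero]
  rw [Finset.sum_ite_eq' Finset.univ s θ]
  exact if_pos (Finset.mem_univ _)

lemma prW (hxy : mx ≤ my) (hPX : IsPMF PX) (hθ : IsPMF θ) {T : ℕ} (hT : 0 < T) (w : ℤ) :
    pr (pJ mx my ms PX θ T) (fun ω => Wat ω 0) w = xiOf mx ms PX θ w := by
  rw [pr_eq_sum_ite]
  have hrw : ∀ ω : Traj mx my ms T,
      (if Wat ω 0 = w then pJ mx my ms PX θ T ω else 0)
        = pJ mx my ms PX θ T ω
            * (fun a b : ℤ => if a = w then (1:ℝ) else 0) (Wat ω 0) (Xat ω 0) := by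
    intro ω
    by_cases h : Wat ω 0 = w <;> simp [h]
  simp only [hrw]
  have hwx := lawWX (mx := mx) (my := my) (ms := ms) hxy hPX hθ hT
    (fun a _ : ℤ => if a = w then (1:ℝ) else 0)
  rw [hwx]
  rw [xiOf, Finset.sum_comm]
  refine Finset.sum_congr rfl fun σ _ => ?_
  rw [Finset.mul_sum]
  refine Finset.sum_congr rfl fun x _ => ?_
  by_cases h : ((σ:ℕ):ℤ) - ((x:ℕ):ℤ) = w
  · rw [if_pos h, if_pos h]; ring
  · rw [if_neg h, if_neg h]; ring

lemma prXZ (hxy : mx ≤ my) (hPX : IsPMF PX) (hθ : IsPMF θ) {T : ℕ} (hT : 0 < T) (k : ℤ) :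
    pr (pJ mx my ms PX θ T) (fun ω => Xat ω 0) k = extZ PX k := by
  rw [pr_eq_sum_ite]
  have hrw : ∀ ω : Traj mx my ms T,
      (if Xat ω 0 = k then pJ mx my ms PX θ T ω else 0)
        = pJ mx my ms PX θ T ω
            * (fun a b : ℤ => if b = k then (1:ℝ) else 0) (Wat ω 0) (Xat ω 0) := by
    intro ω
    by_cases h : Xat ω 0 = k <;> simp [h]
  simp only [hrw]
  have hwx := lawWX (mx := mx) (my := my) (ms := ms) hxy hPX hθ hT
    (fun _ b : ℤ => if b = k then (1:ℝ) else 0)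
  rw [hwx]
  have hin : ∀ σ : Fin (ms+1),
      (∑ x : Fin (mx+1), PX x * (if ((x:ℕ):ℤ) = k then (1:ℝ) else 0)) = extZ PX k := by
    intro σ
    rw [extZ_eq_sum]
    refine Finset.sum_congr rfl fun x _ => ?_
    by_cases h : ((x:ℕ):ℤ) = k
    · rw [if_pos h, if_pos h.symm]; ring
    · rw [if_neg h, if_neg (fun hc => h hc.symm)]; ring
  calc (∑ σ : Fin (ms+1), θ σ * ∑ x : Fin (mx+1),
          PX x * (if ((x:ℕ):ℤ) = k then (1:ℝ) else 0))
      = ∑ σ : Fin (ms+1), θ σ * extZ PX k := by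
        refine Finset.sum_congr rfl fun σ _ => ?_
        rw [hin σ]
    _ = extZ PX k := by rw [← Finset.sum_mul, hθ.2, one_mul]

lemma prSX (hxy : mx ≤ my) (hPX : IsPMF PX) (hθ : IsPMF θ) {T : ℕ} (hT : 0 < T) (z : ℤ × ℤ) :
    pr (pJ mx my ms PX θ T) (fun ω => (Sat ω 0, Xat ω 0)) z
      = extZ θ z.1 * extZ PX z.2 := by
  rw [pr_eq_sum_ite]
  have hrw : ∀ ω : Traj mx my ms T,
      (if (Sat ω 0, Xat ω 0) = z then pJ mx my ms PX θ T ω else 0)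
        = pJ mx my ms PX θ T ω
            * (fun a b : ℤ => if a + b = z.1 ∧ b = z.2 then (1:ℝ) else 0)
                (Wat ω 0) (Xat ω 0) := by
    intro ω
    have hsw : Wat ω 0 + Xat ω 0 = Sat ω 0 := by rw [Wat]; ring
    show (if (Sat ω 0, Xat ω 0) = z then pJ mx my ms PX θ T ω else 0)
      = pJ mx my ms PX θ T ω
          * (if Wat ω 0 + Xat ω 0 = z.1 ∧ Xat ω 0 = z.2 then (1:ℝ) else 0)
    by_cases h : (Sat ω 0, Xat ω 0) = z
    · rw [if_pos h, if_pos ⟨by rw [hsw]; exact congrArg Prod.fst h, congrArg Prod.snd h⟩,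
        mul_one]
    · rw [if_neg h, if_neg (fun hc => h (Prod.ext_iff.mpr
        ⟨by rw [← hsw]; exact hc.1, hc.2⟩)), mul_zero]
  simp only [hrw]
  have hwx := lawWX (mx := mx) (my := my) (ms := ms) hxy hPX hθ hT
    (fun a b : ℤ => if a + b = z.1 ∧ b = z.2 then (1:ℝ) else 0)
  rw [hwx]
  have hin : ∀ σ : Fin (ms+1),
      (∑ x : Fin (mx+1), PX x *
        (if ((σ:ℕ):ℤ) - ((x:ℕ):ℤ) + ((x:ℕ):ℤ) = z.1 ∧ ((x:ℕ):ℤ) = z.2 then (1:ℝ) else 0))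
      = (if ((σ:ℕ):ℤ) = z.1 then (1:ℝ) else 0) * extZ PX z.2 := by
    intro σ
    by_cases hσ : ((σ:ℕ):ℤ) = z.1
    · rw [if_pos hσ, one_mul, extZ_eq_sum]
      refine Finset.sum_congr rfl fun x _ => ?_
      by_cases h : ((x:ℕ):ℤ) = z.2
      · rw [if_pos ⟨by omega, h⟩, if_pos h.symm]; ring
      · rw [if_neg (fun hc => h hc.2), if_neg (fun hc => h hc.symm)]; ring
    · rw [if_neg hσ, zero_mul, Finset.sum_eq_zero]
      intro x _
      rw [if_neg (fun hc => hσ (by omega)), mul_zero]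
  calc (∑ σ : Fin (ms+1), θ σ * ∑ x : Fin (mx+1), PX x *
          (if ((σ:ℕ):ℤ) - ((x:ℕ):ℤ) + ((x:ℕ):ℤ) = z.1 ∧ ((x:ℕ):ℤ) = z.2 then (1:ℝ) else 0))
      = ∑ σ : Fin (ms+1), θ σ * ((if ((σ:ℕ):ℤ) = z.1 then (1:ℝ) else 0) * extZ PX z.2) := by
        refine Finset.sum_congr rfl fun σ _ => ?_
        rw [hin σ]
    _ = (∑ σ : Fin (ms+1), if z.1 = ((σ:ℕ):ℤ) then θ σ else 0) * extZ PX z.2 := by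
        rw [Finset.sum_mul]
        refine Finset.sum_congr rfl fun σ _ => ?_
        by_cases h : ((σ:ℕ):ℤ) = z.1
        · rw [if_pos h, if_pos h.symm]; ring
        · rw [if_neg h, if_neg (fun hc => h hc.symm)]; ring
    _ = extZ θ z.1 * extZ PX z.2 := by rw [← extZ_eq_sum]

lemma prB (hxy : mx ≤ my) (hPX : IsPMF PX) (hθ : IsPMF θ) {T : ℕ} (y : Fin T → Fin (my+1)) :
    pr (pJ mx my ms PX θ T) (fun ω => ω.2.2) y
      = ∏ t : Fin T, extZ PX ((y t : ℕ) : ℤ) := by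
  rw [pr_eq_sum_ite]
  have hk := keyK (mx := mx) hxy hPX hθ y (fun _ => (1:ℝ))
  simp only [mul_one] at hk
  rw [hk, hθ.2, mul_one]

lemma prA_aux (hxy : mx ≤ my) (hPX : IsPMF PX) (hθ : IsPMF θ) : ∀ {T : ℕ} (s : Fin (ms+1)) (x : Fin T → Fin (mx+1)),
    (∑ ω : Traj mx my ms T, if ω.1 = s ∧ ω.2.1 = x then pJ mx my ms PX θ T ω else 0)
      = θ s * ∏ t : Fin T, PX (x t) := by
  intro T
  induction T with
  | zero =>
      intro s x
      rw [sum_traj_zero (fun ω0 : Traj mx my ms 0 =>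
        if ω0.1 = s ∧ ω0.2.1 = x then pJ mx my ms PX θ 0 ω0 else 0)]
      rw [Finset.univ_eq_empty (α := Fin 0), Finset.prod_empty, mul_one]
      refine Eq.trans (Finset.sum_congr rfl fun s' _ => ?_) (by
        rw [Finset.sum_ite_eq' Finset.univ s θ]
        exact if_pos (Finset.mem_univ _))
      show (if s' = s ∧ ((fun i : Fin 0 => i.elim0) : Fin 0 → Fin (mx+1)) = x then
        pJ mx my ms PX θ 0 ((s', (fun i : Fin 0 => i.elim0), (fun i : Fin 0 => i.elim0)) :
          Traj mx my ms 0) else 0) = if s' = s then θ s' else 0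
      rw [pJ_zero]
      by_cases h : s' = s
      · rw [if_pos ⟨h, Subsingleton.elim _ _⟩, if_pos h]
      · rw [if_neg (fun hc => h hc.1), if_neg h]
  | succ T ih =>
      intro s x
      rw [sum_traj_succ]
      have step : ∀ (ω : Traj mx my ms T) (c : Fin (mx+1)),
          (∑ d : Fin (my+1),
            if (snocT ω c d).1 = s ∧ (snocT ω c d).2.1 = x
              then pJ mx my ms PX θ (T+1) (snocT ω c d) else 0)
          = if c = x (Fin.last T) then
              (if ω.1 = s ∧ ω.2.1 = Fin.init x then pJ mx my ms PX θ T ω else 0)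
                * (PX c * (if xiOf mx ms PX θ (Sat ω T - ((c:ℕ):ℤ)) = 0 then 0 else 1))
            else 0 := by
        intro ω c
        have hcond : ∀ d : Fin (my+1),
            ((snocT ω c d).1 = s ∧ (snocT ω c d).2.1 = x)
              = ((ω.1 = s ∧ ω.2.1 = Fin.init x) ∧ c = x (Fin.last T)) := by
          intro d
          rw [eq_iff_iff]
          constructor
          · rintro ⟨h1, h2⟩
            rw [show (snocT ω c d).2.1 = Fin.snoc ω.2.1 c from rfl, snoc_eq_iff] at h2
            exact ⟨⟨h1, h2.1⟩, h2.2⟩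
          · rintro ⟨⟨h1, h2⟩, h3⟩
            exact ⟨h1, (snoc_eq_iff _ _ _).mpr ⟨h2, h3⟩⟩
        simp only [hcond, pJ_snocT]
        by_cases hA : ω.1 = s ∧ ω.2.1 = Fin.init x
        · by_cases hc2 : c = x (Fin.last T)
          · rw [if_pos hc2, if_pos hA]
            have : ∀ d : Fin (my+1),
                (if (ω.1 = s ∧ ω.2.1 = Fin.init x) ∧ c = x (Fin.last T) then
                  pJ mx my ms PX θ T ω
                    * (PX c * bstar mx my ms PX θ (Sat ω T - ((c:ℕ):ℤ)) d) else 0)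
                = pJ mx my ms PX θ T ω * PX c
                    * bstar mx my ms PX θ (Sat ω T - ((c:ℕ):ℤ)) d := by
              intro d
              rw [if_pos ⟨hA, hc2⟩]
              ring
            simp only [this]
            rw [← Finset.mul_sum, sum_bstar hxy]
            split
            · ring
            · ring
          · rw [if_neg hc2, Finset.sum_eq_zero]
            intro d _
            rw [if_neg (fun hc => hc2 hc.2)]
        · by_cases hc2 : c = x (Fin.last T)
          · rw [if_pos hc2, if_neg hA, zero_mul, Finset.sum_eq_zero]
            intro d _
            rw [if_neg (fun hc => hA hc.1)]
          · rw [if_neg hc2, Finset.sum_eq_zero]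
            intro d _
            rw [if_neg (fun hc => hc2 hc.2)]
      simp only [step]
      have hsumc : ∀ ω : Traj mx my ms T,
          (∑ c : Fin (mx+1), if c = x (Fin.last T) then
              (if ω.1 = s ∧ ω.2.1 = Fin.init x then pJ mx my ms PX θ T ω else 0)
                * (PX c * (if xiOf mx ms PX θ (Sat ω T - ((c:ℕ):ℤ)) = 0 then 0 else 1))
            else 0)
          = (if ω.1 = s ∧ ω.2.1 = Fin.init x then pJ mx my ms PX θ T ω else 0)
              * (PX (x (Fin.last T)) *
                (if xiOf mx ms PX θ (Sat ω T - ((x (Fin.last T) :ℕ):ℤ)) = 0 then 0 else 1)) := by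
        intro ω
        rw [Finset.sum_ite_eq' Finset.univ (x (Fin.last T))]
        exact if_pos (Finset.mem_univ _)
      simp only [hsumc]
      by_cases hc : PX (x (Fin.last T)) = 0
      · rw [Finset.sum_eq_zero (fun ω _ => by rw [hc]; ring)]
        rw [Fin.prod_univ_castSucc, hc, mul_zero, mul_zero]
      · have hmain : ∀ ω : Traj mx my ms T,
            (if ω.1 = s ∧ ω.2.1 = Fin.init x then pJ mx my ms PX θ T ω else 0)
              * (PX (x (Fin.last T)) *
                (if xiOf mx ms PX θ (Sat ω T - ((x (Fin.last T) :ℕ):ℤ)) = 0 then 0 else 1))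
            = (if ω.1 = s ∧ ω.2.1 = Fin.init x then pJ mx my ms PX θ T ω else 0)
                * PX (x (Fin.last T)) := by
          intro ω
          by_cases hA : ω.1 = s ∧ ω.2.1 = Fin.init x
          · rw [if_pos hA]
            by_cases hp : pJ mx my ms PX θ T ω = 0
            · rw [hp]; ring
            · obtain ⟨s0, hs0, hθ0⟩ := extZ_ne_zero (supp_Sat hPX.1 hθ.1 ω hp)
              rw [if_neg (xiOf_pos hPX.1 hθ.1 hθ0 (by
                rw [show ((s0:ℕ):ℤ) - (Sat ω T - ((x (Fin.last T):ℕ):ℤ))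
                    = ((x (Fin.last T):ℕ):ℤ) by omega, extZ_coe]
                exact hc))]
              ring
          · rw [if_neg hA]; ring
        simp only [hmain]
        rw [← Finset.sum_mul, ih s (Fin.init x), Fin.prod_univ_castSucc]
        have hin : ∀ t : Fin T, Fin.init x t = x t.castSucc := fun t => rfl
        simp only [hin]
        ring

lemma prA (hxy : mx ≤ my) (hPX : IsPMF PX) (hθ : IsPMF θ) {T : ℕ} (z : Fin (ms+1) × (Fin T → Fin (mx+1))) :
    pr (pJ mx my ms PX θ T) (fun ω => (ω.1, ω.2.1)) z
      = θ z.1 * ∏ t : Fin T, PX (z.2 t) := by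
  rw [pr_eq_sum_ite]
  have hrw : ∀ ω : Traj mx my ms T,
      ((ω.1, ω.2.1) = z) = (ω.1 = z.1 ∧ ω.2.1 = z.2) := by
    intro ω
    rw [eq_iff_iff, Prod.ext_iff]
  simp only [hrw]
  exact prA_aux hxy hPX hθ z.1 z.2

end JointLemmas

section FinalHelpers

variable {mx my ms : ℕ} {PX : Fin (mx + 1) → ℝ} {θ : Fin (ms + 1) → ℝ}

lemma pJ_ne_zero {T : ℕ} {ω : Traj mx my ms T} (h : pJ mx my ms PX θ T ω ≠ 0) :
    θ ω.1 ≠ 0 ∧ ∀ t : Fin T, PX (ω.2.1 t) ≠ 0 ∧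
      bstar mx my ms PX θ (Wat ω (t:ℕ)) (ω.2.2 t) ≠ 0 := by
  rw [pJ] at h
  obtain ⟨h1, h2⟩ := mul_ne_zero_iff.mp h
  exact ⟨h1, fun t =>
    mul_ne_zero_iff.mp (Finset.prod_ne_zero_iff.mp h2 t (Finset.mem_univ t))⟩

lemma Xat_fin {T : ℕ} (ω : Traj mx my ms T) (t : Fin T) :
    Xat ω (t:ℕ) = ((ω.2.1 t : ℕ) : ℤ) := by
  rw [Xat_lt ω t.isLt, Fin.eta]

lemma Yat_fin {T : ℕ} (ω : Traj mx my ms T) (t : Fin T) :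
    Yat ω (t:ℕ) = ((ω.2.2 t : ℕ) : ℤ) := by
  rw [Yat_lt ω t.isLt, Fin.eta]

/-- `H(S₁)` as an explicit sum. -/
lemma entS_eq (hxy : mx ≤ my) (hPX : IsPMF PX) (hθ : IsPMF θ) {T : ℕ} :
    ent (pJ mx my ms PX θ T) (fun ω => ω.1)
      = -∑ s : Fin (ms+1), θ s * Real.logb 2 (θ s) := by
  rw [ent_pointwise]
  congr 1
  have hrw : ∀ ω : Traj mx my ms T,
      pr (pJ mx my ms PX θ T) (fun ω => ω.1) ω.1 = θ ω.1 :=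
    fun ω => prS1 hxy hPX hθ ω.1
  simp only [hrw]
  have hS := lawS1 (mx := mx) (my := my) (T := T) hxy hPX hθ
    (fun s : Fin (ms+1) => Real.logb 2 (θ s))
  exact hS

/-- `H(W₁)` as an explicit sum. -/
lemma entW_eq (hxy : mx ≤ my) (hPX : IsPMF PX) (hθ : IsPMF θ) {T : ℕ} (hT : 0 < T) :
    ent (pJ mx my ms PX θ T) (fun ω => Wat ω 0)
      = -∑ σ : Fin (ms+1), θ σ * ∑ x : Fin (mx+1),
          PX x * Real.logb 2 (xiOf mx ms PX θ (((σ:ℕ):ℤ) - ((x:ℕ):ℤ))) := by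
  rw [ent_pointwise]
  congr 1
  have hrw : ∀ ω : Traj mx my ms T,
      pr (pJ mx my ms PX θ T) (fun ω => Wat ω 0) (Wat ω 0) = xiOf mx ms PX θ (Wat ω 0) :=
    fun ω => prW hxy hPX hθ hT _
  simp only [hrw]
  have hW := lawWX (mx := mx) (my := my) (ms := ms) hxy hPX hθ hT
    (fun a _ : ℤ => Real.logb 2 (xiOf mx ms PX θ a))
  have hrw2 : ∀ ω : Traj mx my ms T,
      pJ mx my ms PX θ T ω * Real.logb 2 (xiOf mx ms PX θ (Wat ω 0))
        = pJ mx my ms PX θ T ω * (fun a _ : ℤ => Real.logb 2 (xiOf mx ms PX θ a))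
            (Wat ω 0) (Xat ω 0) := fun ω => rfl
  simp only [hrw2]
  exact hW

/-- `H(X₁)` in pointwise form. -/
lemma entX_eq (hxy : mx ≤ my) (hPX : IsPMF PX) (hθ : IsPMF θ) {T : ℕ} (hT : 0 < T) :
    ent (pJ mx my ms PX θ T) (fun ω => Xat ω 0)
      = -∑ ω : Traj mx my ms T, pJ mx my ms PX θ T ω
          * Real.logb 2 (extZ PX (Xat ω 0)) := by
  rw [ent_pointwise]
  congr 1
  have hrw : ∀ ω : Traj mx my ms T,
      pr (pJ mx my ms PX θ T) (fun ω => Xat ω 0) (Xat ω 0) = extZ PX (Xat ω 0) :=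
    fun ω => prXZ hxy hPX hθ hT _
  simp only [hrw]

/-- second claim : `I(W₁; X₁) = H(W₁) - H(S₁)`. -/
lemma claim2 (hxy : mx ≤ my) (hPX : IsPMF PX) (hθ : IsPMF θ) {T : ℕ} (hT : 0 < T) :
    mutInfo (pJ mx my ms PX θ T) (fun ω => Wat ω 0) (fun ω => Xat ω 0)
      = ent (pJ mx my ms PX θ T) (fun ω => Wat ω 0)
          - ent (pJ mx my ms PX θ T) (fun ω => ω.1) := by
  have hg : Function.Injective (fun q : ℤ × ℤ => (q.1 + q.2, q.2)) := by
    intro a b h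
    obtain ⟨h1, h2⟩ := Prod.ext_iff.mp h
    simp only at h1 h2
    exact Prod.ext_iff.mpr ⟨by omega, h2⟩
  have hWX : ent (pJ mx my ms PX θ T) (fun ω => (Wat ω 0, Xat ω 0))
      = ent (pJ mx my ms PX θ T) (fun ω => (Sat ω 0, Xat ω 0)) := by
    have := ent_comp_inj (pJ mx my ms PX θ T) (fun ω => (Wat ω 0, Xat ω 0))
      (fun q : ℤ × ℤ => (q.1 + q.2, q.2)) hg
    rw [← this]
    congr 1
    funext ω
    have : Wat ω 0 + Xat ω 0 = Sat ω 0 := by rw [Wat]; ring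
    simp only [this]
  -- H(S₀, X₀) = H(S₁) + H(X₁)
  have hSX : ent (pJ mx my ms PX θ T) (fun ω => (Sat ω 0, Xat ω 0))
      = ent (pJ mx my ms PX θ T) (fun ω => ω.1)
          + ent (pJ mx my ms PX θ T) (fun ω => Xat ω 0) := by
    rw [ent_pointwise]
    have hrw : ∀ ω : Traj mx my ms T,
        pr (pJ mx my ms PX θ T) (fun ω => (Sat ω 0, Xat ω 0)) (Sat ω 0, Xat ω 0)
          = extZ θ (Sat ω 0) * extZ PX (Xat ω 0) :=
      fun ω => prSX hxy hPX hθ hT _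
    simp only [hrw]
    have hsplit : ∀ ω : Traj mx my ms T,
        pJ mx my ms PX θ T ω * Real.logb 2 (extZ θ (Sat ω 0) * extZ PX (Xat ω 0))
          = pJ mx my ms PX θ T ω * Real.logb 2 (θ ω.1)
            + pJ mx my ms PX θ T ω * Real.logb 2 (extZ PX (Xat ω 0)) := by
      intro ω
      by_cases hp : pJ mx my ms PX θ T ω = 0
      · rw [hp, zero_mul, zero_mul, zero_mul, add_zero]
      · obtain ⟨h1, hfac⟩ := pJ_ne_zero hp
        have hθS : extZ θ (Sat ω 0) = θ ω.1 := by rw [Sat_zero, extZ_coe]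
        have hXv : extZ PX (Xat ω 0) = PX (ω.2.1 ⟨0, hT⟩) := by
          rw [Xat_lt ω hT, extZ_coe]
        have hX0 : extZ PX (Xat ω 0) ≠ 0 := by
          rw [hXv]
          exact (hfac ⟨0, hT⟩).1
        rw [hθS, Real.logb_mul h1 hX0, mul_add]
    simp only [hsplit]
    rw [Finset.sum_add_distrib, neg_add]
    congr 1
    · rw [entS_eq hxy hPX hθ]
      congr 1
      have hS := lawS1 (mx := mx) (my := my) (T := T) hxy hPX hθ
        (fun s : Fin (ms+1) => Real.logb 2 (θ s))
      exact hS
    · rw [entX_eq hxy hPX hθ hT]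
  rw [mutInfo, hWX, hSX]
  ring

end FinalHelpers

section Claim1

variable {mx my ms : ℕ} {PX : Fin (mx + 1) → ℝ} {θ : Fin (ms + 1) → ℝ}

lemma claim1 (hxy : mx ≤ my) (hPX : IsPMF PX) (hθ : IsPMF θ) {T : ℕ} (hT : 0 < T) :
    mutInfo (pJ mx my ms PX θ T) (fun ω => (ω.1, ω.2.1)) (fun ω => ω.2.2)
      = (T : ℝ) * (ent (pJ mx my ms PX θ T) (fun ω => Wat ω 0)
          - ent (pJ mx my ms PX θ T) (fun ω => ω.1)) := by
  have hinj : Function.Injective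
      (fun ω : Traj mx my ms T => ((ω.1, ω.2.1), ω.2.2)) := by
    intro a b h
    simp only [Prod.mk.injEq] at h
    exact Prod.ext_iff.mpr ⟨h.1.1, Prod.ext_iff.mpr ⟨h.1.2, h.2⟩⟩
  have ePair : ent (pJ mx my ms PX θ T) (fun ω => ((ω.1, ω.2.1), ω.2.2))
      = -∑ ω : Traj mx my ms T, pJ mx my ms PX θ T ω
          * Real.logb 2 (pJ mx my ms PX θ T ω) := by
    rw [ent_pointwise]
    congr 1
    refine Finset.sum_congr rfl fun ω _ => ?_
    rw [pr_inj (pJ mx my ms PX θ T) _ hinj ω]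
  have eA : ent (pJ mx my ms PX θ T) (fun ω => (ω.1, ω.2.1))
      = -∑ ω : Traj mx my ms T, pJ mx my ms PX θ T ω
          * Real.logb 2 (θ ω.1 * ∏ t : Fin T, PX (ω.2.1 t)) := by
    rw [ent_pointwise]
    congr 1
    refine Finset.sum_congr rfl fun ω _ => ?_
    rw [prA hxy hPX hθ (ω.1, ω.2.1)]
  have eB : ent (pJ mx my ms PX θ T) (fun ω => ω.2.2)
      = -∑ ω : Traj mx my ms T, pJ mx my ms PX θ T ω
          * Real.logb 2 (∏ t : Fin T, extZ PX ((ω.2.2 t : ℕ) : ℤ)) := by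
    rw [ent_pointwise]
    congr 1
    refine Finset.sum_congr rfl fun ω _ => ?_
    rw [prB hxy hPX hθ ω.2.2]
  have key : ∀ ω : Traj mx my ms T,
      pJ mx my ms PX θ T ω * Real.logb 2 (pJ mx my ms PX θ T ω)
        - pJ mx my ms PX θ T ω * Real.logb 2 (θ ω.1 * ∏ t : Fin T, PX (ω.2.1 t))
        - pJ mx my ms PX θ T ω * Real.logb 2 (∏ t : Fin T, extZ PX ((ω.2.2 t : ℕ) : ℤ))
      = pJ mx my ms PX θ T ω * ∑ t : Fin T,
          (Real.logb 2 (extZ θ (Sat ω ((t:ℕ)+1)))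
            - Real.logb 2 (xiOf mx ms PX θ (Wat ω (t:ℕ)))) := by
    intro ω
    by_cases hp : pJ mx my ms PX θ T ω = 0
    · rw [hp]; ring
    · obtain ⟨h1, hfac⟩ := pJ_ne_zero hp
      have hprod1 : ∀ t ∈ (Finset.univ : Finset (Fin T)),
          PX (ω.2.1 t) * bstar mx my ms PX θ (Wat ω (t:ℕ)) (ω.2.2 t) ≠ 0 :=
        fun t _ => mul_ne_zero (hfac t).1 (hfac t).2
      have e4 : ∀ t : Fin T,
          Real.logb 2 (bstar mx my ms PX θ (Wat ω (t:ℕ)) (ω.2.2 t))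
            = Real.logb 2 (extZ PX ((ω.2.2 t : ℕ) : ℤ))
              + (Real.logb 2 (extZ θ (Sat ω ((t:ℕ)+1)))
                - Real.logb 2 (xiOf mx ms PX θ (Wat ω (t:ℕ)))) := by
        intro t
        obtain ⟨hb1, hb2, hb3⟩ := bstar_ne_zero (hfac t).2
        have harg : ((ω.2.2 t : ℕ) : ℤ) + Wat ω (t:ℕ) = Sat ω ((t:ℕ)+1) := by
          rw [Wat, Sat_succ, Yat_fin]
          ring
        rw [bstar_eq, Real.logb_div (mul_ne_zero hb1 hb2) hb3, Real.logb_mul hb1 hb2, harg]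
        ring
      have e1 : Real.logb 2 (pJ mx my ms PX θ T ω)
          = Real.logb 2 (θ ω.1) + ∑ t : Fin T,
              (Real.logb 2 (PX (ω.2.1 t))
                + Real.logb 2 (bstar mx my ms PX θ (Wat ω (t:ℕ)) (ω.2.2 t))) := by
        rw [pJ] at hp ⊢
        rw [Real.logb_mul h1 (right_ne_zero_of_mul hp),
          Real.logb_prod _ _ hprod1]
        congr 1
        exact Finset.sum_congr rfl fun t _ => Real.logb_mul (hfac t).1 (hfac t).2
      have e2 : Real.logb 2 (θ ω.1 * ∏ t : Fin T, PX (ω.2.1 t))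
          = Real.logb 2 (θ ω.1) + ∑ t : Fin T, Real.logb 2 (PX (ω.2.1 t)) := by
        rw [Real.logb_mul h1 (Finset.prod_ne_zero_iff.mpr fun t _ => (hfac t).1),
          Real.logb_prod _ _ (fun t _ => (hfac t).1)]
      have e3 : Real.logb 2 (∏ t : Fin T, extZ PX ((ω.2.2 t : ℕ) : ℤ))
          = ∑ t : Fin T, Real.logb 2 (extZ PX ((ω.2.2 t : ℕ) : ℤ)) :=
        Real.logb_prod _ _ (fun t _ => (bstar_ne_zero (hfac t).2).1)
      have hb : (∑ t : Fin T,
          (Real.logb 2 (PX (ω.2.1 t))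
            + Real.logb 2 (bstar mx my ms PX θ (Wat ω (t:ℕ)) (ω.2.2 t))))
          = (∑ t : Fin T, Real.logb 2 (PX (ω.2.1 t)))
            + ((∑ t : Fin T, Real.logb 2 (extZ PX ((ω.2.2 t : ℕ) : ℤ)))
              + ∑ t : Fin T, (Real.logb 2 (extZ θ (Sat ω ((t:ℕ)+1)))
                - Real.logb 2 (xiOf mx ms PX θ (Wat ω (t:ℕ))))) := by
        rw [Finset.sum_add_distrib]
        congr 1
        rw [← Finset.sum_add_distrib]
        exact Finset.sum_congr rfl fun t _ => e4 t
      rw [e1, e2, e3, hb]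
      ring
  have hterm : ∀ t : Fin T,
      (∑ ω : Traj mx my ms T, pJ mx my ms PX θ T ω *
        (Real.logb 2 (extZ θ (Sat ω ((t:ℕ)+1)))
          - Real.logb 2 (xiOf mx ms PX θ (Wat ω (t:ℕ)))))
      = ent (pJ mx my ms PX θ T) (fun ω => Wat ω 0)
          - ent (pJ mx my ms PX θ T) (fun ω => ω.1) := by
    intro t
    have hsplit : ∀ ω : Traj mx my ms T,
        pJ mx my ms PX θ T ω *
          (Real.logb 2 (extZ θ (Sat ω ((t:ℕ)+1)))
            - Real.logb 2 (xiOf mx ms PX θ (Wat ω (t:ℕ))))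
        = pJ mx my ms PX θ T ω * Real.logb 2 (extZ θ (Sat ω ((t:ℕ)+1)))
          - pJ mx my ms PX θ T ω * Real.logb 2 (xiOf mx ms PX θ (Wat ω (t:ℕ))) :=
      fun ω => by ring
    simp only [hsplit]
    rw [Finset.sum_sub_distrib]
    have hS : (∑ ω : Traj mx my ms T,
        pJ mx my ms PX θ T ω * Real.logb 2 (extZ θ (Sat ω ((t:ℕ)+1))))
        = -ent (pJ mx my ms PX θ T) (fun ω => ω.1) := by
      have hl := lawS_T (mx := mx) (my := my) hxy hPX hθ
        (Nat.succ_le_of_lt t.isLt) (fun k : ℤ => Real.logb 2 (extZ θ k))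
      rw [hl, entS_eq hxy hPX hθ, neg_neg]
      refine Finset.sum_congr rfl fun s _ => ?_
      rw [extZ_coe]
    have hW : (∑ ω : Traj mx my ms T,
        pJ mx my ms PX θ T ω * Real.logb 2 (xiOf mx ms PX θ (Wat ω (t:ℕ))))
        = -ent (pJ mx my ms PX θ T) (fun ω => Wat ω 0) := by
      have hl := lawWX (mx := mx) (my := my) (ms := ms) hxy hPX hθ t.isLt
        (fun a _ : ℤ => Real.logb 2 (xiOf mx ms PX θ a))
      have hrw2 : ∀ ω : Traj mx my ms T,
          pJ mx my ms PX θ T ω * Real.logb 2 (xiOf mx ms PX θ (Wat ω (t:ℕ)))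
            = pJ mx my ms PX θ T ω * (fun a _ : ℤ => Real.logb 2 (xiOf mx ms PX θ a))
                (Wat ω (t:ℕ)) (Xat ω (t:ℕ)) := fun ω => rfl
      simp only [hrw2]
      rw [hl, entW_eq hxy hPX hθ hT, neg_neg]
    rw [hS, hW]
    ring
  calc mutInfo (pJ mx my ms PX θ T) (fun ω => (ω.1, ω.2.1)) (fun ω => ω.2.2)
      = (-∑ ω : Traj mx my ms T, pJ mx my ms PX θ T ω
            * Real.logb 2 (θ ω.1 * ∏ t : Fin T, PX (ω.2.1 t)))
        + (-∑ ω : Traj mx my ms T, pJ mx my ms PX θ T ω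
            * Real.logb 2 (∏ t : Fin T, extZ PX ((ω.2.2 t : ℕ) : ℤ)))
        - (-∑ ω : Traj mx my ms T, pJ mx my ms PX θ T ω
            * Real.logb 2 (pJ mx my ms PX θ T ω)) := by
        rw [mutInfo, eA, eB, ePair]
    _ = (∑ ω : Traj mx my ms T, pJ mx my ms PX θ T ω
            * Real.logb 2 (pJ mx my ms PX θ T ω))
        - (∑ ω : Traj mx my ms T, pJ mx my ms PX θ T ω
            * Real.logb 2 (θ ω.1 * ∏ t : Fin T, PX (ω.2.1 t)))
        - (∑ ω : Traj mx my ms T, pJ mx my ms PX θ T ω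
            * Real.logb 2 (∏ t : Fin T, extZ PX ((ω.2.2 t : ℕ) : ℤ))) := by ring
    _ = ∑ ω : Traj mx my ms T,
          (pJ mx my ms PX θ T ω * Real.logb 2 (pJ mx my ms PX θ T ω)
            - pJ mx my ms PX θ T ω * Real.logb 2 (θ ω.1 * ∏ t : Fin T, PX (ω.2.1 t))
            - pJ mx my ms PX θ T ω
                * Real.logb 2 (∏ t : Fin T, extZ PX ((ω.2.2 t : ℕ) : ℤ))) := by
        rw [Finset.sum_sub_distrib, Finset.sum_sub_distrib]
    _ = ∑ ω : Traj mx my ms T, pJ mx my ms PX θ T ω * ∑ t : Fin T,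
          (Real.logb 2 (extZ θ (Sat ω ((t:ℕ)+1)))
            - Real.logb 2 (xiOf mx ms PX θ (Wat ω (t:ℕ)))) :=
        Finset.sum_congr rfl fun ω _ => key ω
    _ = ∑ t : Fin T, ∑ ω : Traj mx my ms T, pJ mx my ms PX θ T ω *
          (Real.logb 2 (extZ θ (Sat ω ((t:ℕ)+1)))
            - Real.logb 2 (xiOf mx ms PX θ (Wat ω (t:ℕ)))) := by
        simp only [Finset.mul_sum]
        rw [Finset.sum_comm]
    _ = ∑ _t : Fin T, (ent (pJ mx my ms PX θ T) (fun ω => Wat ω 0)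
          - ent (pJ mx my ms PX θ T) (fun ω => ω.1)) :=
        Finset.sum_congr rfl fun t _ => hterm t
    _ = (T : ℝ) * (ent (pJ mx my ms PX θ T) (fun ω => Wat ω 0)
          - ent (pJ mx my ms PX θ T) (fun ω => ω.1)) := by
        rw [Finset.sum_const, Finset.card_univ, Fintype.card_fin, nsmul_eq_mul]

end Claim1


/-- For the process with `S₁ ~ θ`, i.i.d. demand `~ PX` independent of
`S₁`, outputs drawn according to the structured policy `b*(· | W_t)` with `W_t = S_t - X_t`,
and dynamics `S_{t+1} = S_t + Y_t - X_t`: for every horizon `T ≥ 1`,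
`(1/T) I(S₁, X^T; Y^T) = I(W₁; X₁) = H(W₁) - H(S₁)`. -/
theorem structured_policy_leakage (mx my ms : ℕ) (hxy : mx ≤ my)
    (PX : Fin (mx + 1) → ℝ) (hPX : IsPMF PX)
    (θ : Fin (ms + 1) → ℝ) (hθ : IsPMF θ)
    (T : ℕ) (hT : 1 ≤ T) :
    let p := jointA (mx := mx) (my := my) (ms := ms) θ PX
      (structuredPolicyA mx my ms PX θ) T
    mutInfo p (fun ω => (ω.1, ω.2.1)) (fun ω => ω.2.2) / T
        = mutInfo p (fun ω => Wat ω 0) (fun ω => Xat ω 0) ∧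
    mutInfo p (fun ω => Wat ω 0) (fun ω => Xat ω 0)
        = ent p (fun ω => Wat ω 0) - ent p (fun ω => ω.1) := by
  intro p
  have hp : p = pJ mx my ms PX θ T := jointA_eq_pJ T
  have hT0 : 0 < T := hT
  have hTne : (T : ℝ) ≠ 0 := Nat.cast_ne_zero.mpr (by omega)
  constructor
  · rw [hp, claim1 hxy hPX hθ hT0, claim2 hxy hPX hθ hT0, mul_comm, mul_div_assoc,
      div_self hTne, mul_one]
  · rw [hp]
    exact claim2 hxy hPX hθ hT0
end SmartMeter
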